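/- arXiv:2311.00081 — 8 statements merged into one kernel-verified Lean document; each statement's English description precedes it below -/
import Mathlib

section
/- Let 0 < α < 1 be a real number. Then the series ∑_{j=0}^{∞} (-1)^j C(α,j) converges and its sum equals 0; moreover, every partial sum is nonnegative: ∑_{j=0}^{n} (-1)^j C(α,j) ≥ 0 for every natural number n. -/
noncomputable def genBinom (α : ℝ) (j : ℕ) : ℝ :=
  (∏ i ∈ Finset.range j, (α - (i : ℝ))) / (j.factorial : ℝ)

/-- Consistency of the backward-Euler CQ weights for `0 < α < 1`:
the series `∑_{j=0}^∞ (-1)^j C(α,j)` converges with sum `0`, and all partial sums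
`∑_{j=0}^{n} (-1)^j C(α,j)` are nonnegative. -/
theorem backward_euler_cq_consistency (α : ℝ) (hα : 0 < α) (hα1 : α < 1) :
    HasSum (fun j : ℕ => (-1 : ℝ) ^ j * genBinom α j) 0 ∧
      ∀ n : ℕ, 0 ≤ ∑ j ∈ Finset.range (n + 1), (-1 : ℝ) ^ j * genBinom α j := by
  set f : ℕ → ℝ := fun j => (-1 : ℝ) ^ j * genBinom α j with hf
  -- closed form for f (n+1)
  have hfsucc : ∀ n : ℕ, f (n + 1)
      = -α * (∏ i ∈ Finset.range n, ((i : ℝ) + 1 - α)) / ((n + 1).factorial : ℝ) := by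
    intro n
    have h1 : ∏ i ∈ Finset.range (n + 1), (α - (i : ℝ))
        = (∏ i ∈ Finset.range n, (α - ((i : ℝ) + 1))) * α := by
      have := Finset.prod_range_succ' (fun i => (α - (i : ℝ))) n
      simpa using this
    have h2 : ∏ i ∈ Finset.range n, (α - ((i : ℝ) + 1))
        = (-1 : ℝ) ^ n * ∏ i ∈ Finset.range n, ((i : ℝ) + 1 - α) := by
      rw [show ((-1 : ℝ) ^ n) = ∏ _i ∈ Finset.range n, (-1 : ℝ) by simp,
        ← Finset.prod_mul_distrib]
      exact Finset.prod_congr rfl fun i _ => by ring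
    have key : (-1 : ℝ) ^ (n + 1) * (-1 : ℝ) ^ n = -1 := by
      rw [← pow_add]
      exact Odd.neg_one_pow ⟨n, by ring⟩
    simp only [hf, genBinom, h1, h2]
    have hmain : (-1 : ℝ) ^ (n + 1) * (((-1 : ℝ) ^ n * ∏ i ∈ Finset.range n, ((i : ℝ) + 1 - α)) * α)
        = -α * ∏ i ∈ Finset.range n, ((i : ℝ) + 1 - α) := by
      linear_combination ((∏ i ∈ Finset.range n, ((i : ℝ) + 1 - α)) * α) * key
    rw [← mul_div_assoc, hmain]
  -- closed form for partial sums
  have hS : ∀ n : ℕ, ∑ j ∈ Finset.range (n + 1), f j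
      = (∏ i ∈ Finset.range n, ((i : ℝ) + 1 - α)) / (n.factorial : ℝ) := by
    intro n
    induction n with
    | zero => simp [hf, genBinom]
    | succ n ih =>
      rw [Finset.sum_range_succ, ih, hfsucc n, Finset.prod_range_succ]
      have hfac : (((n + 1).factorial : ℝ)) = ((n : ℝ) + 1) * (n.factorial : ℝ) := by
        rw [Nat.factorial_succ]; push_cast; ring
      have h0 : (n.factorial : ℝ) ≠ 0 := Nat.cast_ne_zero.mpr n.factorial_ne_zero
      have h1 : ((n : ℝ) + 1) ≠ 0 := by positivity
      rw [hfac]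
      field_simp
      ring
  have hprodpos : ∀ n : ℕ, 0 < ∏ i ∈ Finset.range n, ((i : ℝ) + 1 - α) := by
    intro n
    apply Finset.prod_pos
    intro i _
    have : (0 : ℝ) ≤ i := Nat.cast_nonneg i
    linarith
  have hfacpos : ∀ n : ℕ, (0 : ℝ) < (n.factorial : ℝ) := fun n =>
    Nat.cast_pos.mpr n.factorial_pos
  have hSnonneg : ∀ n : ℕ, 0 ≤ ∑ j ∈ Finset.range (n + 1), f j := by
    intro n; rw [hS n]; exact le_of_lt (div_pos (hprodpos n) (hfacpos n))
  -- product form of partial sums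
  have hSform : ∀ n : ℕ, ∑ j ∈ Finset.range (n + 1), f j
      = ∏ i ∈ Finset.range n, (((i : ℝ) + 1 - α) / ((i : ℝ) + 1)) := by
    intro n
    rw [hS n, Finset.prod_div_distrib]
    congr 1
    rw [← Finset.prod_range_add_one_eq_factorial]
    push_cast
    rfl
  -- partial sums tend to 0
  have hbound : ∀ n : ℕ, ∑ j ∈ Finset.range (n + 1), f j
      ≤ Real.exp (-(α * ∑ i ∈ Finset.range n, (1 : ℝ) / ((i : ℝ) + 1))) := by
    intro n
    have hneg : -(α * ∑ i ∈ Finset.range n, (1 : ℝ) / ((i : ℝ) + 1))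
        = ∑ i ∈ Finset.range n, -(α / ((i : ℝ) + 1)) := by
      rw [Finset.mul_sum, ← Finset.sum_neg_distrib]
      exact Finset.sum_congr rfl fun i _ => by ring
    rw [hSform n, hneg, Real.exp_sum]
    apply Finset.prod_le_prod
    · intro i _
      have h1 : (0 : ℝ) < (i : ℝ) + 1 := by positivity
      have h2 : (0 : ℝ) < (i : ℝ) + 1 - α := by
        have : (0 : ℝ) ≤ i := Nat.cast_nonneg i
        linarith
      positivity
    · intro i _
      have h1 : (0 : ℝ) < (i : ℝ) + 1 := by positivity
      have h2 : ((i : ℝ) + 1 - α) / ((i : ℝ) + 1) = -(α / ((i : ℝ) + 1)) + 1 := by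
        field_simp
        ring
      rw [h2]
      exact Real.add_one_le_exp _
  -- the exponential bound tends to 0
  have hH : Filter.Tendsto (fun n => ∑ i ∈ Finset.range n, (1 : ℝ) / ((i : ℝ) + 1))
      Filter.atTop Filter.atTop := by
    simpa using Real.tendsto_sum_range_one_div_nat_succ_atTop
  have hexp : Filter.Tendsto
      (fun n => Real.exp (-(α * ∑ i ∈ Finset.range n, (1 : ℝ) / ((i : ℝ) + 1))))
      Filter.atTop (nhds 0) := by
    apply Real.tendsto_exp_atBot.comp
    apply Filter.tendsto_neg_atTop_atBot.comp
    exact hH.const_mul_atTop hα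
  have htend1 : Filter.Tendsto (fun n => ∑ j ∈ Finset.range (n + 1), f j)
      Filter.atTop (nhds 0) :=
    squeeze_zero hSnonneg hbound hexp
  have htend : Filter.Tendsto (fun n => ∑ j ∈ Finset.range n, f j)
      Filter.atTop (nhds 0) :=
    (Filter.tendsto_add_atTop_iff_nat 1).mp htend1
  -- summability
  have hf0 : f 0 = 1 := by simp [hf, genBinom]
  have hgform : ∀ j : ℕ, -f (j + 1)
      = α * (∏ i ∈ Finset.range j, ((i : ℝ) + 1 - α)) / ((j + 1).factorial : ℝ) := by
    intro j
    rw [hfsucc j]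
    ring
  have hgnonneg : ∀ j : ℕ, 0 ≤ -f (j + 1) := by
    intro j
    rw [hgform j]
    exact div_nonneg (mul_nonneg hα.le (hprodpos j).le) (hfacpos (j + 1)).le
  have hsumg : Summable (fun j => -f (j + 1)) := by
    apply summable_of_sum_range_le hgnonneg (c := 1)
    intro n
    have heq : ∑ j ∈ Finset.range n, -f (j + 1) = 1 - ∑ j ∈ Finset.range (n + 1), f j := by
      rw [Finset.sum_range_succ' f n, hf0, Finset.sum_neg_distrib]
      ring
    rw [heq]
    linarith [hSnonneg n]
  have hsf1 : Summable (fun j => f (j + 1)) := by simpa using hsumg.neg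
  have hsf : Summable f := (summable_nat_add_iff 1).mp hsf1
  have heq0 : ∑' j, f j = 0 := tendsto_nhds_unique hsf.hasSum.tendsto_sum_nat htend
  exact ⟨heq0 ▸ hsf.hasSum, hSnonneg⟩
end

section
/- Let 0 < α < 1 be a real number and let j be a natural number. Then the following finite-sum identity holds: 2^{-α} 3^{α} ∑_{k=0}^{j} C(α,k) C(α,j−k) 3^{-k} = 2^{-α} 3^{α−j} C(α,j) ∑_{k=0}^{j} [ ((−j)_k (−α)_k) / ((1−j+α)_k) ] · 3^k / k!, where (a)_k = ∏_{i=0}^{k-1}(a+i) is the Pochhammer symbol. Equivalently, the j-th BDF2 convolution quadrature weight w_j, given via the Cauchy product w_j = (-1)^j 2^{-α} 3^{α} h^{-α} ∑_{k=0}^{j} C(α,k) C(α,j−k) 3^{-k}, satisfies w_j = (-1)^j 2^{-α} 3^{α−j} C(α,j) · ₂F₁(−j, −α; 1−j+α; 3) · h^{-α}, where ₂F₁(−j,−α;1−j+α;3) denotes the terminating hypergeometric sum ∑_{k=0}^{j} ((−j)_k (−α)_k/(1−j+α)_k) 3^k/k!. -/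
/-- The Pochhammer symbol `(a)_k = ∏_{i=0}^{k-1} (a + i)`. -/
noncomputable def poch (a : ℝ) (k : ℕ) : ℝ :=
  ∏ i ∈ Finset.range k, (a + (i : ℝ))

open Finset

lemma factor_ne (α : ℝ) (hα : 0 < α) (hα1 : α < 1) (m : ℕ) : α - (m : ℝ) ≠ 0 := by
  rcases Nat.eq_zero_or_pos m with h | h
  · subst h; simpa using hα.ne'
  · have : (1 : ℝ) ≤ m := by exact_mod_cast h
    linarith

lemma prod_ne (α : ℝ) (hα : 0 < α) (hα1 : α < 1) (m : ℕ) :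
    (∏ i ∈ range m, (α - (i : ℝ))) ≠ 0 :=
  prod_ne_zero_iff.2 fun i _ => factor_ne α hα hα1 i

lemma descProd (j k : ℕ) (hk : k ≤ j) :
    (∏ i ∈ range k, ((j : ℝ) - (i : ℝ))) * ((j - k).factorial : ℝ) = (j.factorial : ℝ) := by
  induction k with
  | zero => simp
  | succ k ih =>
    have hk' : k ≤ j := Nat.le_of_succ_le hk
    rw [prod_range_succ]
    have h1 : (j : ℝ) - (k : ℝ) = ((j - k : ℕ) : ℝ) := by
      have : (k : ℝ) ≤ j := by exact_mod_cast hk'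
      push_cast [Nat.cast_sub hk']; ring
    have h2 : (j - k) = (j - (k+1)) + 1 := by omega
    have h3 : ((j - k).factorial : ℝ) = ((j - k : ℕ) : ℝ) * ((j - (k+1)).factorial : ℝ) := by
      rw [h2, Nat.factorial_succ]; push_cast; ring
    calc (∏ i ∈ range k, ((j : ℝ) - i)) * ((j:ℝ) - k) * ((j - (k+1)).factorial : ℝ)
        = (∏ i ∈ range k, ((j : ℝ) - i)) * (((j-k:ℕ):ℝ) * ((j - (k+1)).factorial : ℝ)) := by
          rw [h1]; ring
      _ = (∏ i ∈ range k, ((j : ℝ) - i)) * ((j - k).factorial : ℝ) := by rw [h3]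
      _ = _ := ih hk'

lemma pochProd (α : ℝ) (j k : ℕ) :
    poch (-(j : ℝ)) k * poch (-α) k =
      (∏ i ∈ range k, ((j : ℝ) - (i : ℝ))) * (∏ i ∈ range k, (α - (i : ℝ))) := by
  rw [poch, poch, ← prod_mul_distrib, ← prod_mul_distrib]
  exact prod_congr rfl fun i _ => by ring

lemma pochShift (α : ℝ) (j k : ℕ) (hk : k ≤ j) :
    (∏ i ∈ range (j - k), (α - (i : ℝ))) * poch (1 - (j : ℝ) + α) k =
      ∏ i ∈ range j, (α - (i : ℝ)) := by
  have hj : j = (j - k) + k := by omega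
  have : poch (1 - (j : ℝ) + α) k = ∏ i ∈ range k, (α - (((j - k) + i : ℕ) : ℝ)) := by
    rw [poch, ← prod_range_reflect fun i => (α - (((j - k) + i : ℕ) : ℝ))]
    refine prod_congr rfl fun i hi => ?_
    have hik : i < k := mem_range.1 hi
    have : ((j - k) + (k - 1 - i) : ℕ) = j - 1 - i := by omega
    rw [this]
    have h1 : ((j - 1 - i : ℕ) : ℝ) = (j : ℝ) - 1 - (i : ℝ) := by
      push_cast [Nat.cast_sub (by omega : i ≤ j - 1), Nat.cast_sub (by omega : 1 ≤ j)]; ring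
    rw [h1]; ring
  rw [this]
  conv_rhs => rw [hj, prod_range_add]

lemma poch_ne (α : ℝ) (hα : 0 < α) (hα1 : α < 1) (j k : ℕ) (hk : k ≤ j) :
    poch (1 - (j : ℝ) + α) k ≠ 0 := by
  intro h
  have := pochShift α j k hk
  rw [h, mul_zero] at this
  exact prod_ne α hα hα1 j this.symm

lemma termwise (α : ℝ) (hα : 0 < α) (hα1 : α < 1) (j k : ℕ) (hk : k ≤ j) :
    genBinom α j *
        (poch (-(j : ℝ)) k * poch (-α) k / poch (1 - (j : ℝ) + α) k * (3 : ℝ) ^ k /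
          (k.factorial : ℝ)) =
      genBinom α k * genBinom α (j - k) * (3 : ℝ) ^ k := by
  have hQ := pochShift α j k hk
  have hD := descProd j k hk
  have hAB : poch (-(j : ℝ)) k * poch (-α) k * ((j - k).factorial : ℝ) =
      (j.factorial : ℝ) * ∏ i ∈ Finset.range k, (α - (i : ℝ)) := by
    rw [pochProd]
    calc (∏ i ∈ range k, ((j : ℝ) - i)) * (∏ i ∈ range k, (α - (i:ℝ))) * ((j-k).factorial : ℝ)
        = ((∏ i ∈ range k, ((j : ℝ) - i)) * ((j-k).factorial : ℝ)) *
            (∏ i ∈ range k, (α - (i:ℝ))) := by ring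
      _ = _ := by rw [hD]
  have hQne := poch_ne α hα hα1 j k hk
  have hPj := prod_ne α hα hα1 j
  have hPk := prod_ne α hα hα1 k
  have hPjk := prod_ne α hα hα1 (j - k)
  have hfj : (j.factorial : ℝ) ≠ 0 := Nat.cast_ne_zero.2 j.factorial_ne_zero
  have hfk : (k.factorial : ℝ) ≠ 0 := Nat.cast_ne_zero.2 k.factorial_ne_zero
  have hfjk : ((j - k).factorial : ℝ) ≠ 0 := Nat.cast_ne_zero.2 (j - k).factorial_ne_zero
  rw [genBinom, genBinom, genBinom]
  field_simp
  linear_combination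
    (∏ i ∈ range j, (α - (i:ℝ))) * hAB -
    ((∏ i ∈ range k, (α - (i:ℝ))) * (j.factorial : ℝ)) * hQ

/-- Explicit hypergeometric form of the BDF2 CQ weights: the finite-sum identity
`2^{-α} 3^{α} ∑_{k=0}^{j} C(α,k) C(α,j−k) 3^{-k}
  = 2^{-α} 3^{α−j} C(α,j) ∑_{k=0}^{j} ((−j)_k (−α)_k / (1−j+α)_k) 3^k / k!`,
and the equivalent formula for the weight `w_j` (defined via the Cauchy product)
`w_j = (-1)^j 2^{-α} 3^{α−j} C(α,j) ₂F₁(−j,−α;1−j+α;3) h^{-α}`. -/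
theorem bdf2_weights_hypergeometric (α : ℝ) (hα : 0 < α) (hα1 : α < 1) (j : ℕ) :
    ((2 : ℝ) ^ (-α) * (3 : ℝ) ^ α *
        ∑ k ∈ Finset.range (j + 1), genBinom α k * genBinom α (j - k) * ((3 : ℝ) ^ k)⁻¹
      = (2 : ℝ) ^ (-α) * (3 : ℝ) ^ (α - (j : ℝ)) * genBinom α j *
        ∑ k ∈ Finset.range (j + 1),
          poch (-(j : ℝ)) k * poch (-α) k / poch (1 - (j : ℝ) + α) k * (3 : ℝ) ^ k /
            (k.factorial : ℝ)) ∧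
    ∀ h : ℝ, 0 < h →
      (-1 : ℝ) ^ j * (2 : ℝ) ^ (-α) * (3 : ℝ) ^ α * h ^ (-α) *
          ∑ k ∈ Finset.range (j + 1), genBinom α k * genBinom α (j - k) * ((3 : ℝ) ^ k)⁻¹
        = (-1 : ℝ) ^ j * (2 : ℝ) ^ (-α) * (3 : ℝ) ^ (α - (j : ℝ)) * genBinom α j *
            (∑ k ∈ Finset.range (j + 1),
              poch (-(j : ℝ)) k * poch (-α) k / poch (1 - (j : ℝ) + α) k * (3 : ℝ) ^ k /
                (k.factorial : ℝ)) * h ^ (-α) := by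
  have hsum : genBinom α j *
      (∑ k ∈ Finset.range (j + 1),
        poch (-(j : ℝ)) k * poch (-α) k / poch (1 - (j : ℝ) + α) k * (3 : ℝ) ^ k /
          (k.factorial : ℝ)) =
      ∑ k ∈ Finset.range (j + 1), genBinom α k * genBinom α (j - k) * (3 : ℝ) ^ k := by
    rw [mul_sum]
    exact sum_congr rfl fun k hk =>
      termwise α hα hα1 j k (Nat.lt_succ_iff.1 (mem_range.1 hk))
  have hreflect : (∑ k ∈ Finset.range (j + 1),
        genBinom α k * genBinom α (j - k) * ((3 : ℝ) ^ k)⁻¹) =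
      ((3 : ℝ) ^ j)⁻¹ *
        ∑ k ∈ Finset.range (j + 1), genBinom α k * genBinom α (j - k) * (3 : ℝ) ^ k := by
    rw [mul_sum, ← sum_range_reflect]
    refine sum_congr rfl fun k hk => ?_
    have hk' : k ≤ j := Nat.lt_succ_iff.1 (mem_range.1 hk)
    have h1 : j + 1 - 1 - k = j - k := by omega
    have h2 : j - (j - k) = k := by omega
    rw [h1, h2]
    have h3 : ((3 : ℝ) ^ (j - k))⁻¹ = (3 : ℝ) ^ k * ((3 : ℝ) ^ j)⁻¹ := by
      have hp : (3 : ℝ) ^ (j - k) * (3 : ℝ) ^ k = 3 ^ j := by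
        rw [← pow_add]; congr 1; omega
      have h3j : ((3 : ℝ) ^ j) ≠ 0 := by positivity
      have h3jk : ((3 : ℝ) ^ (j - k)) ≠ 0 := by positivity
      field_simp
      linarith [hp]
    rw [h3]; ring
  have hrpow : (3 : ℝ) ^ (α - (j : ℝ)) = (3 : ℝ) ^ α * ((3 : ℝ) ^ j)⁻¹ := by
    rw [Real.rpow_sub (by norm_num), div_eq_mul_inv, Real.rpow_natCast]
  have eq1 : (2 : ℝ) ^ (-α) * (3 : ℝ) ^ α *
        ∑ k ∈ Finset.range (j + 1), genBinom α k * genBinom α (j - k) * ((3 : ℝ) ^ k)⁻¹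
      = (2 : ℝ) ^ (-α) * (3 : ℝ) ^ (α - (j : ℝ)) * genBinom α j *
        ∑ k ∈ Finset.range (j + 1),
          poch (-(j : ℝ)) k * poch (-α) k / poch (1 - (j : ℝ) + α) k * (3 : ℝ) ^ k /
            (k.factorial : ℝ) := by
    rw [hreflect, hrpow]
    linear_combination (-((2 : ℝ) ^ (-α) * (3 : ℝ) ^ α * ((3 : ℝ) ^ j)⁻¹)) * hsum
  exact ⟨eq1, fun h _ => by linear_combination ((-1 : ℝ) ^ j * h ^ (-α)) * eq1⟩
end

section
/- Let H be a real inner product space, and let w : ℕ → ℝ be weights satisfying w_0 > 0, w_j < 0 for all j ≥ 1, and ∑_{j=0}^{n} w_j ≥ 0 for every n ≥ 0. Let (y^n)_{n≥0} be a sequence in H with y^0 = 0. Then for every n ≥ 1: (1/2) ∑_{j=0}^{n} w_{n−j} ‖y^j‖² ≤ ‖y^n‖ · ( ∑_{j=0}^{n} w_{n−j} ‖y^j‖ ) ≤ ⟨ ∑_{j=0}^{n} w_{n−j} y^j , y^n ⟩. -/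
open RealInnerProductSpace

/-- Discrete analogue of `(1/2) ∂ᵅ ‖y‖² ≤ ‖y‖ ∂ᵅ ‖y‖ ≤ ⟨∂ᵅ y, y⟩` for admissible CQ weights:
if `w_0 > 0`, `w_j < 0` for `j ≥ 1`, all partial sums of the weights are nonnegative, and
`y^0 = 0`, then for every `n ≥ 1`
`(1/2) ∑_{j=0}^{n} w_{n−j} ‖y^j‖² ≤ ‖y^n‖ ∑_{j=0}^{n} w_{n−j} ‖y^j‖ ≤ ⟨∑_{j=0}^{n} w_{n−j} y^j, y^n⟩`. -/
theorem cq_coercivity {H : Type*} [NormedAddCommGroup H] [InnerProductSpace ℝ H]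
    (w : ℕ → ℝ) (hw0 : 0 < w 0) (hwneg : ∀ j : ℕ, 1 ≤ j → w j < 0)
    (hwsum : ∀ n : ℕ, 0 ≤ ∑ j ∈ Finset.range (n + 1), w j)
    (y : ℕ → H) (hy0 : y 0 = 0) (n : ℕ) (hn : 1 ≤ n) :
    (1 / 2 : ℝ) * ∑ j ∈ Finset.range (n + 1), w (n - j) * ‖y j‖ ^ 2 ≤
        ‖y n‖ * ∑ j ∈ Finset.range (n + 1), w (n - j) * ‖y j‖ ∧
      ‖y n‖ * ∑ j ∈ Finset.range (n + 1), w (n - j) * ‖y j‖ ≤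
        ⟪∑ j ∈ Finset.range (n + 1), w (n - j) • y j, y n⟫ := by
  constructor
  · -- first inequality
    have hrefl : ∑ j ∈ Finset.range (n + 1), w (n - j) = ∑ j ∈ Finset.range (n + 1), w j := by
      have := Finset.sum_range_reflect w (n + 1)
      simpa using this
    have h1 : 0 ≤ (∑ j ∈ Finset.range (n + 1), w (n - j)) * ‖y n‖ ^ 2 / 2 := by
      rw [hrefl]
      have := hwsum n
      positivity
    have h2 : ∑ j ∈ Finset.range (n + 1), w (n - j) * (‖y n‖ - ‖y j‖) ^ 2 ≤ 0 := by
      apply Finset.sum_nonpos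
      intro j hj
      rcases eq_or_ne j n with rfl | hne
      · simp
      · have hj1 : 1 ≤ n - j := by
          have : j < n := lt_of_le_of_ne (Nat.lt_succ_iff.mp (Finset.mem_range.mp hj)) hne
          omega
        have := hwneg _ hj1
        nlinarith [sq_nonneg (‖y n‖ - ‖y j‖)]
    have key : ‖y n‖ * ∑ j ∈ Finset.range (n + 1), w (n - j) * ‖y j‖ -
        (1 / 2 : ℝ) * ∑ j ∈ Finset.range (n + 1), w (n - j) * ‖y j‖ ^ 2 =
        (∑ j ∈ Finset.range (n + 1), w (n - j)) * ‖y n‖ ^ 2 / 2 -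
        (1 / 2 : ℝ) * ∑ j ∈ Finset.range (n + 1), w (n - j) * (‖y n‖ - ‖y j‖) ^ 2 := by
      rw [Finset.mul_sum, Finset.mul_sum, Finset.mul_sum, Finset.sum_mul, Finset.sum_div,
        ← Finset.sum_sub_distrib, ← Finset.sum_sub_distrib]
      apply Finset.sum_congr rfl
      intro j _
      ring
    linarith
  · -- second inequality
    have step : ∀ j ∈ Finset.range (n + 1),
        w (n - j) * (‖y j‖ * ‖y n‖) ≤ w (n - j) * ⟪y j, y n⟫ := by
      intro j hj
      rcases eq_or_ne j n with rfl | hne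
      · rw [real_inner_self_eq_norm_mul_norm]
      · have hj1 : 1 ≤ n - j := by
          have : j < n := lt_of_le_of_ne (Nat.lt_succ_iff.mp (Finset.mem_range.mp hj)) hne
          omega
        have hwj := hwneg _ hj1
        have hcs : ⟪y j, y n⟫ ≤ ‖y j‖ * ‖y n‖ := real_inner_le_norm _ _
        nlinarith
    calc ‖y n‖ * ∑ j ∈ Finset.range (n + 1), w (n - j) * ‖y j‖
        = ∑ j ∈ Finset.range (n + 1), w (n - j) * (‖y j‖ * ‖y n‖) := by
          rw [Finset.mul_sum]; apply Finset.sum_congr rfl; intro j _; ring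
      _ ≤ ∑ j ∈ Finset.range (n + 1), w (n - j) * ⟪y j, y n⟫ := Finset.sum_le_sum step
      _ = ⟪∑ j ∈ Finset.range (n + 1), w (n - j) • y j, y n⟫ := by
          rw [sum_inner]
          apply Finset.sum_congr rfl
          intro j _
          rw [real_inner_smul_left]
end

section
/- Let 0 < α < 1, h > 0, T > 0, and let M_0, M_1, M_2 ≥ 0. Let (y^n)_{n≥0} be a sequence of nonnegative real numbers with y^0 = 0 which satisfies, for every n ≥ 1, y^n ≤ M_0 t_n^{α−1} + M_1 h^{α} ∑_{k=0}^{n−1} (n−k)^{α−1} y^k + M_2, where t_n = n h. Then for every n ≥ 1: y^n ≤ M_0 Γ(α) t_n^{α−1} E_{α,α}(M_1 Γ(α) t_n^{α}) + M_2 E_{α}(M_1 Γ(α) t_n^{α}), where E_{α,β}(z) = ∑_{k=0}^{∞} z^k / Γ(αk + β) is the two-parameter Mittag-Leffler function and E_α := E_{α,1}. -/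
open Real Set MeasureTheory

section GronwallAux

lemma gamma_mono : MonotoneOn Real.Gamma (Set.Ici 2) :=
  Real.Gamma_strictMonoOn_Ici.monotoneOn

lemma summable_ml (α β z : ℝ) (hα : 0 < α) (hβ : 0 < β) (hz : 0 ≤ z) :
    Summable (fun j : ℕ => z ^ j / Real.Gamma (α * j + β)) := by
  set a : ℕ → ℝ := fun j => z ^ j / Real.Gamma (α * j + β) with ha
  have hapos : ∀ j, 0 ≤ a j := by
    intro j
    exact div_nonneg (pow_nonneg hz j) (Real.Gamma_pos_of_pos (by positivity)).le
  obtain ⟨p, hp⟩ := exists_nat_ge (2 / α)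
  have hp2 : 2 ≤ α * p := by
    rw [← div_le_iff₀' hα]; exact hp
  have hp0 : 0 < p := by
    by_contra hcon
    push_neg at hcon
    interval_cases p
    simp at hp2; linarith
  -- each residue-class subsequence is summable
  have hsub : ∀ i : ℕ, Summable (fun m : ℕ => a (p * m + i)) := by
    intro i
    apply summable_of_ratio_norm_eventually_le (r := 1/2) (by norm_num)
    obtain ⟨M, hM⟩ := exists_nat_ge ((2 + 2 * z ^ p) / (α * p))
    filter_upwards [Filter.eventually_ge_atTop M] with m hm
    set x : ℝ := α * (p * m + i) + β with hx
    have hx2 : 2 + 2 * z ^ p ≤ x := by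
      have h1 : (2 + 2 * z ^ p) ≤ α * p * M := by
        rw [div_le_iff₀ (by positivity)] at hM; linarith
      have h2 : α * p * M ≤ α * (p * m) := by
        have : (M : ℝ) ≤ m := Nat.cast_le.mpr hm
        calc α * p * M ≤ α * p * m := by nlinarith
          _ = α * (p * m) := by push_cast; ring
      have : α * (p*m) ≤ α * (p * m + i) := by
        have : (0:ℝ) ≤ α * i := by positivity
        push_cast; nlinarith
      push_cast at h2 this ⊢
      linarith
    have hzp : (0:ℝ) ≤ z ^ p := pow_nonneg hz p
    have hxge2 : (2:ℝ) ≤ x := by linarith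
    have hxpos : 0 < x := by linarith
    have hGx : 0 < Real.Gamma x := Real.Gamma_pos_of_pos hxpos
    have harg : α * ↑(p * (m + 1) + i) + β = x + α * p := by push_cast; ring
    have hGam_ge : (x + 1) * x * Real.Gamma x ≤ Real.Gamma (x + α * p) := by
      have h1 : Real.Gamma (x + 2) ≤ Real.Gamma (x + α * p) := by
        apply gamma_mono (by simp; linarith) (by simp; linarith) (by linarith)
      have h2 : Real.Gamma (x + 2) = (x + 1) * x * Real.Gamma x := by
        have e1 : x + 2 = (x + 1) + 1 := by ring
        rw [e1, Real.Gamma_add_one (by linarith), Real.Gamma_add_one (by linarith)]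
        ring
      linarith
    have hnum : z ^ (p * (m + 1) + i) = z ^ (p * m + i) * z ^ p := by
      rw [← pow_add]; congr 1; ring
    have hval : a (p * (m + 1) + i) ≤ 1/2 * a (p * m + i) := by
      rw [ha]
      simp only [harg, hnum]
      have hstep1 : z ^ (p * m + i) * z ^ p / Real.Gamma (x + α * p)
          ≤ z ^ (p * m + i) * z ^ p / ((x + 1) * x * Real.Gamma x) := by
        apply div_le_div_of_nonneg_left (by positivity) (by positivity) hGam_ge
      have hstep2 : z ^ (p * m + i) * z ^ p / ((x + 1) * x * Real.Gamma x)
          ≤ 1/2 * (z ^ (p * m + i) / Real.Gamma (α * ↑(p * m + i) + β)) := by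
        have hxarg : α * ↑(p * m + i) + β = x := by rw [hx]; push_cast; ring
        rw [hxarg]
        have key : z ^ p / ((x + 1) * x) ≤ 1/2 := by
          rw [div_le_iff₀ (by positivity)]
          nlinarith
        have e : z ^ (p * m + i) * z ^ p / ((x + 1) * x * Real.Gamma x)
            = (z ^ (p * m + i) / Real.Gamma x) * (z ^ p / ((x + 1) * x)) := by
          rw [div_mul_div_comm, mul_comm (Real.Gamma x) ((x + 1) * x)]
        rw [e]
        calc (z ^ (p * m + i) / Real.Gamma x) * (z ^ p / ((x + 1) * x))
            ≤ (z ^ (p * m + i) / Real.Gamma x) * (1/2) :=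
              mul_le_mul_of_nonneg_left key (by positivity)
          _ = 1/2 * (z ^ (p * m + i) / Real.Gamma x) := by ring
      exact hstep1.trans hstep2
    rw [Real.norm_of_nonneg (hapos _), Real.norm_of_nonneg (hapos _)]
    exact hval
  -- combine the residue classes
  apply summable_of_sum_range_le (c := ∑ i ∈ Finset.range p, ∑' m, a (p * m + i)) hapos
  intro N
  have hsubset : Finset.range N ⊆ (Finset.range p ×ˢ Finset.range N).image
      (fun q : ℕ × ℕ => p * q.2 + q.1) := by
    intro j hj
    simp only [Finset.mem_image, Finset.mem_product, Finset.mem_range] at *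
    exact ⟨(j % p, j / p), ⟨Nat.mod_lt _ hp0, lt_of_le_of_lt (Nat.div_le_self j p) hj⟩,
      Nat.div_add_mod j p⟩
  calc ∑ j ∈ Finset.range N, a j
      ≤ ∑ j ∈ (Finset.range p ×ˢ Finset.range N).image (fun q : ℕ × ℕ => p * q.2 + q.1), a j :=
        Finset.sum_le_sum_of_subset_of_nonneg hsubset (fun j _ _ => hapos j)
    _ = ∑ q ∈ Finset.range p ×ˢ Finset.range N, a (p * q.2 + q.1) := by
        apply Finset.sum_image
        rintro ⟨i, m⟩ h1 ⟨i', m'⟩ h2 heq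
        simp only [Finset.mem_coe, Finset.mem_product, Finset.mem_range] at h1 h2
        have hi : i = i' := by
          have := congrArg (· % p) heq
          simpa [Nat.mul_add_mod, Nat.mod_eq_of_lt h1.1, Nat.mod_eq_of_lt h2.1] using this
        have hm : m = m' := by
          have := congrArg (· / p) heq
          simpa [Nat.mul_add_div hp0, Nat.div_eq_of_lt h1.1, Nat.div_eq_of_lt h2.1] using this
        simp [hi, hm]
    _ = ∑ i ∈ Finset.range p, ∑ m ∈ Finset.range N, a (p * m + i) := by
        rw [Finset.sum_product]
    _ ≤ ∑ i ∈ Finset.range p, ∑' m, a (p * m + i) := by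
        apply Finset.sum_le_sum
        intro i _
        exact Summable.sum_le_tsum _ (fun m _ => hapos _) (hsub i)


lemma integrableOn_beta_kernel {α γ N : ℝ} (hα : 0 < α) (hα1 : α < 1) (hγ : 0 < γ)
    (hN : 0 < N) :
    IntegrableOn (fun s => s ^ (γ - 1) * (N - s) ^ (α - 1)) (Set.Ioc 0 N) := by
  set f : ℝ → ℝ := fun s => s ^ (γ - 1) * (N - s) ^ (α - 1) with hf
  rw [integrableOn_Ioc_iff_integrableOn_Ioo]
  have hsub : Set.Ioo (0:ℝ) N ⊆ Set.Ioc 0 (N/2) ∪ Set.Ioo (N/2) N := by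
    intro x hx
    rcases le_or_gt x (N/2) with h | h
    · exact Or.inl ⟨hx.1, h⟩
    · exact Or.inr ⟨h, hx.2⟩
  have part1 : IntegrableOn f (Set.Ioc 0 (N/2)) := by
    have hcont : ContinuousOn f (Set.Ioc 0 (N/2)) := by
      intro x hx
      apply ContinuousAt.continuousWithinAt
      apply ContinuousAt.mul
      · exact Real.continuousAt_rpow_const x _ (Or.inl (ne_of_gt hx.1))
      · exact (Real.continuousAt_rpow_const (N - x) _
          (Or.inl (ne_of_gt (by nlinarith [hx.2])))).comp
          ((continuous_const.sub continuous_id).continuousAt)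
    have hg : IntegrableOn (fun s : ℝ => s ^ (γ - 1) * (N/2) ^ (α - 1)) (Set.Ioc 0 (N/2)) := by
      apply Integrable.mul_const
      exact (intervalIntegrable_iff_integrableOn_Ioc_of_le (by linarith)).1
        (intervalIntegral.intervalIntegrable_rpow' (by linarith))
    apply Integrable.mono' hg (hcont.aestronglyMeasurable measurableSet_Ioc)
    rw [ae_restrict_iff' measurableSet_Ioc]
    apply ae_of_all
    intro x hx
    rw [Real.norm_of_nonneg (mul_nonneg (Real.rpow_nonneg hx.1.le _)
      (Real.rpow_nonneg (by nlinarith [hx.2] : (0:ℝ) ≤ N - x) _))]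
    apply mul_le_mul_of_nonneg_left _ (Real.rpow_nonneg hx.1.le _)
    exact Real.rpow_le_rpow_of_nonpos (by linarith) (by linarith [hx.2]) (by linarith)
  have part2 : IntegrableOn f (Set.Ioo (N/2) N) := by
    have hcont : ContinuousOn f (Set.Ioo (N/2) N) := by
      intro x hx
      apply ContinuousAt.continuousWithinAt
      apply ContinuousAt.mul
      · exact Real.continuousAt_rpow_const x _ (Or.inl (ne_of_gt (by nlinarith [hx.1])))
      · exact (Real.continuousAt_rpow_const (N - x) _
          (Or.inl (ne_of_gt (by nlinarith [hx.2])))).comp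
          ((continuous_const.sub continuous_id).continuousAt)
    set C : ℝ := max (N ^ (γ - 1)) ((N/2) ^ (γ - 1)) with hC
    have hg : IntegrableOn (fun s : ℝ => C * (N - s) ^ (α - 1)) (Set.Ioo (N/2) N) := by
      apply Integrable.const_mul
      have h1 : IntervalIntegrable (fun x : ℝ => x ^ (α - 1)) volume 0 (N/2) :=
        intervalIntegral.intervalIntegrable_rpow' (by linarith)
      have h2 := h1.comp_sub_left N
      rw [show N - (0:ℝ) = N by ring, show N - N/2 = N/2 by ring] at h2
      exact (((intervalIntegrable_iff_integrableOn_Ioc_of_le (by linarith)).1 h2.symm).mono_set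
        Set.Ioo_subset_Ioc_self)
    apply Integrable.mono' hg (hcont.aestronglyMeasurable measurableSet_Ioo)
    rw [ae_restrict_iff' measurableSet_Ioo]
    apply ae_of_all
    intro x hx
    have hx0 : (0:ℝ) < x := by nlinarith [hx.1]
    rw [Real.norm_of_nonneg (mul_nonneg (Real.rpow_nonneg hx0.le _)
      (Real.rpow_nonneg (by linarith [hx.2] : (0:ℝ) ≤ N - x) _))]
    apply mul_le_mul_of_nonneg_right _ (Real.rpow_nonneg (by linarith [hx.2]) _)
    rcases le_or_gt 1 γ with hγ1 | hγ1
    · exact le_trans (Real.rpow_le_rpow hx0.le hx.2.le (by linarith)) (le_max_left _ _)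
    · exact le_trans (Real.rpow_le_rpow_of_nonpos (by linarith) hx.1.le (by linarith))
        (le_max_right _ _)
  exact ((part1.union part2).mono_set hsub)

lemma real_beta {α γ N : ℝ} (hα : 0 < α) (hγ : 0 < γ) (hN : 0 < N) :
    ∫ s in Set.Ioc (0:ℝ) N, s ^ (γ - 1) * (N - s) ^ (α - 1)
      = Real.Gamma γ * Real.Gamma α / Real.Gamma (γ + α) * N ^ (γ + α - 1) := by
  have hc := Complex.betaIntegral_scaled (γ : ℂ) (α : ℂ) hN
  have htrans : (∫ x in (0:ℝ)..N, (x : ℂ) ^ ((γ:ℂ) - 1) * ((N : ℂ) - x) ^ ((α:ℂ) - 1))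
      = ((∫ s in Set.Ioc (0:ℝ) N, s ^ (γ - 1) * (N - s) ^ (α - 1) : ℝ) : ℂ) := by
    have e : Set.EqOn (fun x : ℝ => (x : ℂ) ^ ((γ:ℂ) - 1) * ((N : ℂ) - x) ^ ((α:ℂ) - 1))
        (fun x : ℝ => ((x ^ (γ - 1) * (N - x) ^ (α - 1) : ℝ) : ℂ)) (Set.uIcc 0 N) := by
      intro x hx
      rw [Set.uIcc_of_le hN.le] at hx
      simp only
      rw [show ((γ:ℂ) - 1) = ((γ - 1 : ℝ) : ℂ) by push_cast; ring,
        show ((α:ℂ) - 1) = ((α - 1 : ℝ) : ℂ) by push_cast; ring,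
        show ((N:ℂ) - (x:ℂ)) = ((N - x : ℝ) : ℂ) by push_cast; ring,
        ← Complex.ofReal_cpow hx.1, ← Complex.ofReal_cpow (by linarith [hx.2] : (0:ℝ) ≤ N - x)]
      push_cast
      ring
    rw [intervalIntegral.integral_congr e, intervalIntegral.integral_ofReal,
      intervalIntegral.integral_of_le hN.le]
  have hGpos : 0 < Real.Gamma (γ + α) := Real.Gamma_pos_of_pos (by linarith)
  have hbeta : Complex.betaIntegral (γ:ℂ) (α:ℂ)
      = ((Real.Gamma γ * Real.Gamma α / Real.Gamma (γ + α) : ℝ) : ℂ) := by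
    have h1 := Complex.Gamma_mul_Gamma_eq_betaIntegral
      (by simp [hγ] : 0 < (γ:ℂ).re) (by simp [hα] : 0 < (α:ℂ).re)
    have h2 : ((γ:ℂ) + α) = ((γ + α : ℝ) : ℂ) := by push_cast; ring
    rw [h2, Complex.Gamma_ofReal, Complex.Gamma_ofReal, Complex.Gamma_ofReal] at h1
    have h3 : ((Real.Gamma (γ + α) : ℝ) : ℂ) ≠ 0 := by
      simp only [ne_eq, Complex.ofReal_eq_zero]
      exact ne_of_gt hGpos
    push_cast
    rw [h1]
    exact (mul_div_cancel_left₀ _ h3).symm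
  rw [htrans, hbeta] at hc
  have h4 : ((N:ℂ)) ^ ((γ:ℂ) + (α:ℂ) - 1) = ((N ^ (γ + α - 1) : ℝ) : ℂ) := by
    rw [show (γ:ℂ) + (α:ℂ) - 1 = ((γ + α - 1 : ℝ) : ℂ) by push_cast; ring,
      ← Complex.ofReal_cpow hN.le]
  rw [h4] at hc
  rw [← Complex.ofReal_mul, Complex.ofReal_inj] at hc
  rw [hc]; ring


lemma sum_le_integral_unimodal {f : ℝ → ℝ} {n : ℕ} {s0 : ℝ}
    (hs0 : 0 ≤ s0) (hs0n : s0 ≤ n)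
    (hint : IntegrableOn f (Set.Ioc 0 (n : ℝ)))
    (hpos : ∀ x ∈ Set.Ioc (0 : ℝ) (n : ℝ), 0 ≤ f x)
    (hdec : AntitoneOn f (Set.Ioc 0 s0))
    (hinc : MonotoneOn f (Set.Ico s0 (n : ℝ))) :
    ∑ k ∈ Finset.Ico 1 n, f k ≤ ∫ x in Set.Ioc (0 : ℝ) (n : ℝ), f x := by
  set A : ℕ → Set ℝ := fun k =>
    if (k : ℝ) ≤ s0 then Set.Ioc ((k : ℝ) - 1) k else Set.Ico (k : ℝ) ((k : ℝ) + 1) with hA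
  have hk_facts : ∀ k ∈ Finset.Ico 1 n, (1 : ℝ) ≤ (k : ℝ) ∧ (k : ℝ) + 1 ≤ (n : ℝ) := by
    intro k hk
    rw [Finset.mem_Ico] at hk
    constructor
    · exact_mod_cast hk.1
    · have : k + 1 ≤ n := hk.2
      exact_mod_cast this
  have hAsub : ∀ k ∈ Finset.Ico 1 n, A k ⊆ Set.Ioc 0 (n : ℝ) := by
    intro k hk x hx
    obtain ⟨h1, h2⟩ := hk_facts k hk
    rw [hA] at hx
    by_cases hc : (k : ℝ) ≤ s0 <;> simp only [hc, if_true, if_false] at hx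
    · exact ⟨by linarith [hx.1], by linarith [hx.2]⟩
    · exact ⟨by linarith [hx.1], by linarith [hx.2]⟩
  have hAmeas : ∀ k, MeasurableSet (A k) := by
    intro k
    rw [hA]
    by_cases hc : (k : ℝ) ≤ s0 <;> simp only [hc, if_true, if_false]
    · exact measurableSet_Ioc
    · exact measurableSet_Ico
  have hAint : ∀ k ∈ Finset.Ico 1 n, IntegrableOn f (A k) := by
    intro k hk
    exact hint.mono_set (hAsub k hk)
  have hfk : ∀ k ∈ Finset.Ico 1 n, f k ≤ ∫ x in A k, f x := by
    intro k hk
    obtain ⟨h1, h2⟩ := hk_facts k hk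
    have hlow : ∀ x ∈ A k, f k ≤ f x := by
      intro x hx
      rw [hA] at hx
      by_cases hc : (k : ℝ) ≤ s0 <;> simp only [hc, if_true, if_false] at hx
      · exact hdec ⟨by linarith [hx.1], by linarith [hx.2]⟩ ⟨by linarith, hc⟩ hx.2
      · push_neg at hc
        exact hinc ⟨hc.le, by linarith⟩ ⟨by linarith [hx.1], by linarith [hx.2]⟩ hx.1
    have hvol : (volume (A k)).toReal = 1 := by
      rw [hA]
      by_cases hc : (k : ℝ) ≤ s0 <;> simp only [hc, if_true, if_false]
      · rw [Real.volume_Ioc]; norm_num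
      · rw [Real.volume_Ico]; norm_num
    have hfin : volume (A k) ≠ ⊤ := by
      rw [hA]
      by_cases hc : (k : ℝ) ≤ s0 <;> simp only [hc, if_true, if_false]
      · exact measure_Ioc_lt_top.ne
      · exact measure_Ico_lt_top.ne
    have := setIntegral_ge_of_const_le (hAmeas k) hfin hlow (hAint k hk)
    rwa [measureReal_def, hvol, one_smul] at this
  have key : ∀ k m : ℕ, (1 : ℝ) ≤ (k : ℝ) → k < m → Disjoint (A k) (A m) := by
    intro k m h1 hkm
    have hkm' : (k : ℝ) + 1 ≤ (m : ℝ) := by exact_mod_cast hkm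
    rw [hA]
    simp only
    by_cases hck : (k : ℝ) ≤ s0 <;> by_cases hcm : (m : ℝ) ≤ s0 <;>
      simp only [hck, hcm, if_true, if_false]
    · rw [Set.disjoint_left]; intro x hx1 hx2
      exact absurd hx2.1 (not_lt.mpr (by linarith [hx1.2]))
    · rw [Set.disjoint_left]; intro x hx1 hx2
      exact absurd hx2.1 (not_le.mpr (by linarith [hx1.2]))
    · exact absurd hcm (by push_neg; linarith [not_le.mp hck])
    · rw [Set.disjoint_left]; intro x hx1 hx2
      exact absurd hx2.1 (not_le.mpr (by linarith [hx1.2]))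
  have hdisj : Set.Pairwise ↑(Finset.Ico 1 n) (Function.onFun Disjoint A) := by
    intro k hk m hm hkm
    simp only [Finset.coe_Ico, Set.mem_Ico] at hk hm
    rcases lt_or_gt_of_ne hkm with hlt | hgt
    · exact key k m (by exact_mod_cast hk.1) hlt
    · exact (key m k (by exact_mod_cast hm.1) hgt).symm
  calc ∑ k ∈ Finset.Ico 1 n, f k ≤ ∑ k ∈ Finset.Ico 1 n, ∫ x in A k, f x :=
        Finset.sum_le_sum hfk
    _ = ∫ x in ⋃ k ∈ Finset.Ico 1 n, A k, f x :=
        (integral_biUnion_finset _ (fun k _ => hAmeas k) hdisj hAint).symm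
    _ ≤ ∫ x in Set.Ioc (0 : ℝ) (n : ℝ), f x := by
        apply setIntegral_mono_set hint
        · filter_upwards [ae_restrict_mem measurableSet_Ioc] with x hx using hpos x hx
        · apply HasSubset.Subset.eventuallyLE
          exact Set.iUnion₂_subset hAsub

lemma beta_hasDerivAt {α γ N : ℝ} {x : ℝ} (hx0 : 0 < x) (hxN : x < N) :
    HasDerivAt (fun s : ℝ => s ^ (γ - 1) * (N - s) ^ (α - 1))
      (x ^ (γ - 2) * (N - x) ^ (α - 2) * ((2 - α - γ) * x - (1 - γ) * N)) x := by
  have hNx : 0 < N - x := by linarith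
  have h1 : HasDerivAt (fun s : ℝ => s ^ (γ - 1)) ((γ - 1) * x ^ (γ - 1 - 1)) x :=
    Real.hasDerivAt_rpow_const (Or.inl hx0.ne')
  have h2 : HasDerivAt (fun s : ℝ => N - s) (-1) x := (hasDerivAt_id x).const_sub N
  have h3 : HasDerivAt (fun s : ℝ => (N - s) ^ (α - 1))
      ((α - 1) * (N - x) ^ (α - 1 - 1) * -1) x :=
    (Real.hasDerivAt_rpow_const (x := N - x) (p := α - 1) (Or.inl hNx.ne')).comp x h2
  have hD := h1.mul h3
  refine hD.congr_deriv ?_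
  have e1 : x ^ (γ - 1) = x ^ (γ - 2) * x := by
    rw [show γ - 1 = (γ - 2) + 1 by ring, Real.rpow_add_one hx0.ne']
  have e2 : (N - x) ^ (α - 1) = (N - x) ^ (α - 2) * (N - x) := by
    rw [show α - 1 = (α - 2) + 1 by ring, Real.rpow_add_one hNx.ne']
  rw [show γ - 1 - 1 = γ - 2 by ring, show α - 1 - 1 = α - 2 by ring, e1, e2]
  ring

lemma kernel_sum_le {α γ h : ℝ} (hα0 : 0 < α) (hα1 : α < 1) (hγ : 0 < γ) (hh : 0 < h)
    {n : ℕ} (hn : 1 ≤ n) :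
    h ^ α * ∑ k ∈ Finset.Ico 1 n, ((n - k : ℕ) : ℝ) ^ (α - 1) * ((k : ℝ) * h) ^ (γ - 1)
      ≤ Real.Gamma α * Real.Gamma γ / Real.Gamma (α + γ) * ((n : ℝ) * h) ^ (α + γ - 1) := by
  have hN : (0 : ℝ) < (n : ℝ) := by exact_mod_cast hn
  set N : ℝ := (n : ℝ) with hNdef
  set f : ℝ → ℝ := fun s => s ^ (γ - 1) * (N - s) ^ (α - 1) with hf
  -- continuity helper
  have hcontAt : ∀ x : ℝ, 0 < x → x < N → ContinuousAt f x := by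
    intro x hx0 hxN
    apply ContinuousAt.mul
    · exact Real.continuousAt_rpow_const x _ (Or.inl hx0.ne')
    · exact (Real.continuousAt_rpow_const (N - x) _
        (Or.inl (ne_of_gt (by linarith : (0:ℝ) < N - x)))).comp
        ((continuous_const.sub continuous_id).continuousAt)
  -- nonnegativity
  have hfpos : ∀ x ∈ Set.Ioc (0 : ℝ) N, 0 ≤ f x := by
    intro x hx
    exact mul_nonneg (Real.rpow_nonneg hx.1.le _) (Real.rpow_nonneg (by linarith [hx.2]) _)
  -- step B: the sum-integral comparison, with a case split on γ
  have hstepB : ∑ k ∈ Finset.Ico 1 n, f k ≤ ∫ x in Set.Ioc (0 : ℝ) N, f x := by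
    rcases le_or_gt 1 γ with hγ1 | hγ1
    · -- monotone increasing case, s0 = 0
      apply sum_le_integral_unimodal le_rfl hN.le
        (integrableOn_beta_kernel hα0 hα1 hγ hN) hfpos
      · rw [Set.Ioc_self]
        intro a ha
        exact absurd ha (Set.notMem_empty a)
      · intro x hx y hy hxy
        apply mul_le_mul (Real.rpow_le_rpow hx.1 hxy (by linarith))
          (Real.rpow_le_rpow_of_nonpos (by linarith [hy.2]) (by linarith) (by linarith))
          (Real.rpow_nonneg (by linarith [hx.2]) _) (Real.rpow_nonneg (by linarith [hx.1]) _)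
    · -- unimodal case, s0 = (1-γ)N/(2-α-γ)
      set s0 : ℝ := (1 - γ) * N / (2 - α - γ) with hs0def
      have hden : 0 < 2 - α - γ := by linarith
      have hs0pos : 0 < s0 := by
        apply div_pos (by nlinarith) hden
      have hs0N : s0 < N := by
        rw [div_lt_iff₀ hden]
        nlinarith
      apply sum_le_integral_unimodal hs0pos.le hs0N.le
        (integrableOn_beta_kernel hα0 hα1 hγ hN) hfpos
      · -- antitone on Ioc 0 s0
        apply antitoneOn_of_deriv_nonpos (convex_Ioc 0 s0)
        · intro x hx
          exact (hcontAt x hx.1 (lt_of_le_of_lt hx.2 hs0N)).continuousWithinAt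
        · rw [interior_Ioc]
          intro x hx
          exact (beta_hasDerivAt hx.1 (lt_trans hx.2 hs0N)).differentiableAt.differentiableWithinAt
        · rw [interior_Ioc]
          intro x hx
          rw [(beta_hasDerivAt hx.1 (lt_trans hx.2 hs0N)).deriv]
          apply mul_nonpos_of_nonneg_of_nonpos
          · have hxN : x < N := lt_trans hx.2 hs0N
            have h1 : (0:ℝ) < N - x := by linarith
            exact mul_nonneg (Real.rpow_nonneg hx.1.le _) (Real.rpow_nonneg h1.le _)
          · have := hx.2
            rw [hs0def, lt_div_iff₀ hden] at this
            nlinarith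
      · -- monotone on Ico s0 N
        apply monotoneOn_of_deriv_nonneg (convex_Ico s0 N)
        · intro x hx
          exact (hcontAt x (lt_of_lt_of_le hs0pos hx.1) hx.2).continuousWithinAt
        · rw [interior_Ico]
          intro x hx
          exact (beta_hasDerivAt (lt_trans hs0pos hx.1) hx.2).differentiableAt.differentiableWithinAt
        · rw [interior_Ico]
          intro x hx
          rw [(beta_hasDerivAt (lt_trans hs0pos hx.1) hx.2).deriv]
          apply mul_nonneg
          · have h1 : (0:ℝ) < N - x := by linarith [hx.2]
            have hx0 : 0 < x := lt_trans hs0pos hx.1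
            exact mul_nonneg (Real.rpow_nonneg hx0.le _) (Real.rpow_nonneg h1.le _)
          · have := hx.1
            rw [hs0def, div_lt_iff₀ hden] at this
            nlinarith
  -- step A: rewrite the sum
  have hstepA : ∑ k ∈ Finset.Ico 1 n, ((n - k : ℕ) : ℝ) ^ (α - 1) * ((k : ℝ) * h) ^ (γ - 1)
      = h ^ (γ - 1) * ∑ k ∈ Finset.Ico 1 n, f k := by
    rw [Finset.mul_sum]
    apply Finset.sum_congr rfl
    intro k hk
    rw [Finset.mem_Ico] at hk
    have hcast : ((n - k : ℕ) : ℝ) = N - (k : ℝ) := by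
      rw [hNdef]
      have : k ≤ n := hk.2.le
      push_cast [Nat.cast_sub this]
      ring
    rw [hcast, hf]
    simp only
    rw [Real.mul_rpow (Nat.cast_nonneg k) hh.le]
    ring
  calc h ^ α * ∑ k ∈ Finset.Ico 1 n, ((n - k : ℕ) : ℝ) ^ (α - 1) * ((k : ℝ) * h) ^ (γ - 1)
      = h ^ α * (h ^ (γ - 1) * ∑ k ∈ Finset.Ico 1 n, f k) := by rw [hstepA]
    _ ≤ h ^ α * (h ^ (γ - 1) * ∫ x in Set.Ioc (0 : ℝ) N, f x) := by
        apply mul_le_mul_of_nonneg_left _ (Real.rpow_nonneg hh.le _)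
        exact mul_le_mul_of_nonneg_left hstepB (Real.rpow_nonneg hh.le _)
    _ = h ^ α * (h ^ (γ - 1) * (Real.Gamma γ * Real.Gamma α / Real.Gamma (γ + α)
          * N ^ (γ + α - 1))) := by rw [hf]; rw [real_beta hα0 hγ hN]
    _ = Real.Gamma α * Real.Gamma γ / Real.Gamma (α + γ) * (N * h) ^ (α + γ - 1) := by
        have e1 : h ^ α * h ^ (γ - 1) = h ^ (α + γ - 1) := by
          rw [← Real.rpow_add hh]; ring_nf
        rw [show γ + α = α + γ from by ring, Real.mul_rpow hN.le hh.le, ← e1]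
        ring

end GronwallAux

/-- The two-parameter Mittag-Leffler function `E_{α,β}(z) = ∑_{k=0}^∞ z^k / Γ(αk + β)`. -/
noncomputable def mittagLeffler (α β z : ℝ) : ℝ :=
  ∑' k : ℕ, z ^ k / Real.Gamma (α * k + β)

/-- Discrete fractional Grönwall inequality (integral version): if a nonnegative sequence
`y` with `y^0 = 0` satisfies `y^n ≤ M₀ t_n^{α−1} + M₁ h^α ∑_{k=0}^{n−1} (n−k)^{α−1} y^k + M₂`
for all `n ≥ 1`, where `t_n = n h`, then
`y^n ≤ M₀ Γ(α) t_n^{α−1} E_{α,α}(M₁ Γ(α) t_n^α) + M₂ E_α(M₁ Γ(α) t_n^α)`. -/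
theorem discrete_fractional_gronwall_integral (α h T M0 M1 M2 : ℝ)
    (hα : 0 < α) (hα1 : α < 1) (hh : 0 < h) (hT : 0 < T)
    (hM0 : 0 ≤ M0) (hM1 : 0 ≤ M1) (hM2 : 0 ≤ M2)
    (y : ℕ → ℝ) (hy : ∀ n : ℕ, 0 ≤ y n) (hy0 : y 0 = 0)
    (hrec : ∀ n : ℕ, 1 ≤ n →
      y n ≤ M0 * ((n : ℝ) * h) ^ (α - 1) +
        M1 * h ^ α * ∑ k ∈ Finset.range n, ((n - k : ℕ) : ℝ) ^ (α - 1) * y k + M2) :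
    ∀ n : ℕ, 1 ≤ n →
      y n ≤ M0 * Real.Gamma α * ((n : ℝ) * h) ^ (α - 1) *
          mittagLeffler α α (M1 * Real.Gamma α * ((n : ℝ) * h) ^ α) +
        M2 * mittagLeffler α 1 (M1 * Real.Gamma α * ((n : ℝ) * h) ^ α) := by
  have hGα : 0 < Real.Gamma α := Real.Gamma_pos_of_pos hα
  set c : ℝ := M1 * Real.Gamma α with hcdef
  have hc : 0 ≤ c := mul_nonneg hM1 hGα.le
  set g : ℝ → ℕ → ℝ := fun t j =>
    M0 * Real.Gamma α * t ^ (α - 1) * ((c * t ^ α) ^ j / Real.Gamma (α * j + α)) +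
      M2 * ((c * t ^ α) ^ j / Real.Gamma (α * j + 1)) with hgdef
  -- summability facts
  have hznn : ∀ t : ℝ, 0 ≤ t → 0 ≤ c * t ^ α := fun t ht =>
    mul_nonneg hc (Real.rpow_nonneg ht _)
  have S1 : ∀ t : ℝ, 0 ≤ t → Summable (fun j : ℕ => (c * t ^ α) ^ j / Real.Gamma (α * j + α)) :=
    fun t ht => summable_ml α α _ hα hα (hznn t ht)
  have S2 : ∀ t : ℝ, 0 ≤ t → Summable (fun j : ℕ => (c * t ^ α) ^ j / Real.Gamma (α * j + 1)) :=
    fun t ht => summable_ml α 1 _ hα one_pos (hznn t ht)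
  have Sg : ∀ t : ℝ, 0 ≤ t → Summable (g t) := by
    intro t ht
    rw [hgdef]
    exact (((S1 t ht).mul_left _).add ((S2 t ht).mul_left _))
  -- closed form of g for positive t
  have g_eq : ∀ t : ℝ, 0 < t → ∀ j : ℕ,
      g t j = M0 * Real.Gamma α * c ^ j * t ^ ((α * j + α) - 1) / Real.Gamma (α * j + α) +
        M2 * c ^ j * t ^ ((α * j + 1) - 1) / Real.Gamma (α * j + 1) := by
    intro t ht j
    rw [hgdef]
    simp only
    rw [show ((α * (j:ℝ) + α) - 1) = (α - 1) + α * (j:ℝ) by ring,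
      show ((α * (j:ℝ) + 1) - 1) = α * (j:ℝ) by ring,
      Real.rpow_add ht, mul_pow, ← Real.rpow_natCast (t ^ α) j, ← Real.rpow_mul ht.le]
    ring
  -- positivity of the Gammas
  have hγ1 : ∀ j : ℕ, (0:ℝ) < α * j + α := by
    intro j
    have : (0:ℝ) ≤ α * j := by positivity
    linarith
  have hγ2 : ∀ j : ℕ, (0:ℝ) < α * j + 1 := by
    intro j
    have : (0:ℝ) ≤ α * j := by positivity
    linarith
  -- key one-step convolution bound
  have keystep : ∀ n : ℕ, 1 ≤ n → ∀ j : ℕ,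
      M1 * h ^ α * ∑ k ∈ Finset.Ico 1 n, ((n - k : ℕ) : ℝ) ^ (α - 1) * g ((k : ℝ) * h) j
        ≤ g ((n : ℝ) * h) (j + 1) := by
    intro n hn j
    have htn : (0:ℝ) < (n : ℝ) * h := by
      have : (0:ℝ) < (n:ℝ) := by exact_mod_cast hn
      positivity
    have hΓ1 : 0 < Real.Gamma (α * j + α) := Real.Gamma_pos_of_pos (hγ1 j)
    have hΓ2 : 0 < Real.Gamma (α * j + 1) := Real.Gamma_pos_of_pos (hγ2 j)
    have expand : ∀ k ∈ Finset.Ico 1 n,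
        ((n - k : ℕ) : ℝ) ^ (α - 1) * g ((k : ℝ) * h) j
          = M0 * Real.Gamma α * c ^ j / Real.Gamma (α * j + α) *
              (((n - k : ℕ) : ℝ) ^ (α - 1) * (((k : ℝ) * h) ^ ((α * j + α) - 1))) +
            M2 * c ^ j / Real.Gamma (α * j + 1) *
              (((n - k : ℕ) : ℝ) ^ (α - 1) * (((k : ℝ) * h) ^ ((α * j + 1) - 1))) := by
      intro k hk
      rw [Finset.mem_Ico] at hk
      have hk0 : (0:ℝ) < (k : ℝ) * h := by
        have : (0:ℝ) < (k:ℝ) := by exact_mod_cast hk.1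
        positivity
      rw [g_eq _ hk0]
      ring
    have hsum_expand : ∑ k ∈ Finset.Ico 1 n, ((n - k : ℕ) : ℝ) ^ (α - 1) * g ((k : ℝ) * h) j
        = M0 * Real.Gamma α * c ^ j / Real.Gamma (α * j + α) *
            ∑ k ∈ Finset.Ico 1 n, ((n - k : ℕ) : ℝ) ^ (α - 1) * ((k : ℝ) * h) ^ ((α * j + α) - 1) +
          M2 * c ^ j / Real.Gamma (α * j + 1) *
            ∑ k ∈ Finset.Ico 1 n, ((n - k : ℕ) : ℝ) ^ (α - 1) * ((k : ℝ) * h) ^ ((α * j + 1) - 1) := by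
      rw [Finset.sum_congr rfl expand, Finset.sum_add_distrib, ← Finset.mul_sum, ← Finset.mul_sum]
    have K1 := kernel_sum_le hα hα1 (hγ1 j) hh hn
    have K2 := kernel_sum_le hα hα1 (hγ2 j) hh hn
    have hD1 : (0:ℝ) ≤ M1 * (M0 * Real.Gamma α * c ^ j / Real.Gamma (α * j + α)) := by
      apply mul_nonneg hM1
      apply div_nonneg _ hΓ1.le
      exact mul_nonneg (mul_nonneg hM0 hGα.le) (pow_nonneg hc j)
    have hD2 : (0:ℝ) ≤ M1 * (M2 * c ^ j / Real.Gamma (α * j + 1)) := by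
      apply mul_nonneg hM1
      apply div_nonneg _ hΓ2.le
      exact mul_nonneg hM2 (pow_nonneg hc j)
    calc M1 * h ^ α * ∑ k ∈ Finset.Ico 1 n, ((n - k : ℕ) : ℝ) ^ (α - 1) * g ((k : ℝ) * h) j
        = M1 * (M0 * Real.Gamma α * c ^ j / Real.Gamma (α * j + α)) *
            (h ^ α * ∑ k ∈ Finset.Ico 1 n,
              ((n - k : ℕ) : ℝ) ^ (α - 1) * ((k : ℝ) * h) ^ ((α * j + α) - 1)) +
          M1 * (M2 * c ^ j / Real.Gamma (α * j + 1)) *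
            (h ^ α * ∑ k ∈ Finset.Ico 1 n,
              ((n - k : ℕ) : ℝ) ^ (α - 1) * ((k : ℝ) * h) ^ ((α * j + 1) - 1)) := by
          rw [hsum_expand]; ring
      _ ≤ M1 * (M0 * Real.Gamma α * c ^ j / Real.Gamma (α * j + α)) *
            (Real.Gamma α * Real.Gamma (α * j + α) / Real.Gamma (α + (α * j + α)) *
              ((n : ℝ) * h) ^ (α + (α * j + α) - 1)) +
          M1 * (M2 * c ^ j / Real.Gamma (α * j + 1)) *
            (Real.Gamma α * Real.Gamma (α * j + 1) / Real.Gamma (α + (α * j + 1)) *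
              ((n : ℝ) * h) ^ (α + (α * j + 1) - 1)) := by
          exact add_le_add (mul_le_mul_of_nonneg_left K1 hD1) (mul_le_mul_of_nonneg_left K2 hD2)
      _ = g ((n : ℝ) * h) (j + 1) := by
          rw [g_eq _ htn (j + 1),
            show α + (α * (j:ℝ) + α) = α * ((j:ℕ) + 1 : ℕ) + α by push_cast; ring,
            show α + (α * (j:ℝ) + 1) = α * ((j:ℕ) + 1 : ℕ) + 1 by push_cast; ring,
            pow_succ]
          have hΓ1' : Real.Gamma (α * j + α) ≠ 0 := hΓ1.ne'
          have hΓ2' : Real.Gamma (α * j + 1) ≠ 0 := hΓ2.ne'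
          field_simp
          ring
  -- main claim by strong induction
  have main : ∀ n : ℕ, 1 ≤ n → y n ≤ ∑' j, g ((n : ℝ) * h) j := by
    intro n
    induction n using Nat.strong_induction_on with
    | _ n IH =>
      intro hn1
      have htn : (0:ℝ) < (n : ℝ) * h := by
        have : (0:ℝ) < (n:ℝ) := by exact_mod_cast hn1
        positivity
      have hIco : ∑ k ∈ Finset.range n, ((n - k : ℕ) : ℝ) ^ (α - 1) * y k
          = ∑ k ∈ Finset.Ico 1 n, ((n - k : ℕ) : ℝ) ^ (α - 1) * y k := by
        rw [Finset.range_eq_Ico]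
        apply (Finset.sum_subset (Finset.Ico_subset_Ico (by omega) le_rfl) _).symm
        intro x hx hnx
        have : x = 0 := by
          simp only [Finset.mem_Ico] at hx hnx
          omega
        rw [this, hy0, mul_zero]
      have hb1 : ∑ k ∈ Finset.Ico 1 n, ((n - k : ℕ) : ℝ) ^ (α - 1) * y k
          ≤ ∑ k ∈ Finset.Ico 1 n, ((n - k : ℕ) : ℝ) ^ (α - 1) * ∑' j, g ((k : ℝ) * h) j := by
        apply Finset.sum_le_sum
        intro k hk
        rw [Finset.mem_Ico] at hk
        exact mul_le_mul_of_nonneg_left (IH k hk.2 hk.1) (Real.rpow_nonneg (Nat.cast_nonneg _) _)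
      have hswap : M1 * h ^ α * ∑ k ∈ Finset.Ico 1 n,
            ((n - k : ℕ) : ℝ) ^ (α - 1) * ∑' j, g ((k : ℝ) * h) j
          = ∑' j, M1 * h ^ α * ∑ k ∈ Finset.Ico 1 n,
              ((n - k : ℕ) : ℝ) ^ (α - 1) * g ((k : ℝ) * h) j := by
        have e1 : ∀ k ∈ Finset.Ico 1 n,
            ((n - k : ℕ) : ℝ) ^ (α - 1) * ∑' j, g ((k : ℝ) * h) j
              = ∑' j, ((n - k : ℕ) : ℝ) ^ (α - 1) * g ((k : ℝ) * h) j :=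
          fun k _ => (tsum_mul_left).symm
        rw [Finset.sum_congr rfl e1,
          ← Summable.tsum_finsetSum (fun k _ => Summable.mul_left _ (Sg _ (by positivity))),
          ← tsum_mul_left]
      have hLHSsum : Summable (fun j => M1 * h ^ α * ∑ k ∈ Finset.Ico 1 n,
          ((n - k : ℕ) : ℝ) ^ (α - 1) * g ((k : ℝ) * h) j) := by
        apply Summable.mul_left
        apply summable_sum
        intro k _
        exact Summable.mul_left _ (Sg _ (by positivity))
      have hb2 : (∑' j, M1 * h ^ α * ∑ k ∈ Finset.Ico 1 n,
            ((n - k : ℕ) : ℝ) ^ (α - 1) * g ((k : ℝ) * h) j)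
          ≤ ∑' j, g ((n : ℝ) * h) (j + 1) :=
        Summable.tsum_le_tsum (fun j => keystep n hn1 j) hLHSsum
          ((summable_nat_add_iff 1).mpr (Sg _ htn.le))
      have hb3 : (∑' j, g ((n : ℝ) * h) (j + 1))
          = (∑' j, g ((n : ℝ) * h) j) - g ((n : ℝ) * h) 0 := by
        have := Summable.tsum_eq_zero_add (Sg ((n : ℝ) * h) htn.le)
        linarith
      have hg0 : g ((n : ℝ) * h) 0 = M0 * ((n : ℝ) * h) ^ (α - 1) + M2 := by
        rw [hgdef]
        simp only [Nat.cast_zero, mul_zero, zero_add, pow_zero, Real.Gamma_one]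
        field_simp
      have := hrec n hn1
      rw [hIco] at this
      have hchain : M1 * h ^ α * ∑ k ∈ Finset.Ico 1 n, ((n - k : ℕ) : ℝ) ^ (α - 1) * y k
          ≤ (∑' j, g ((n : ℝ) * h) j) - g ((n : ℝ) * h) 0 := by
        calc M1 * h ^ α * ∑ k ∈ Finset.Ico 1 n, ((n - k : ℕ) : ℝ) ^ (α - 1) * y k
            ≤ M1 * h ^ α * ∑ k ∈ Finset.Ico 1 n,
                ((n - k : ℕ) : ℝ) ^ (α - 1) * ∑' j, g ((k : ℝ) * h) j :=
              mul_le_mul_of_nonneg_left hb1 (by positivity)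
          _ = ∑' j, M1 * h ^ α * ∑ k ∈ Finset.Ico 1 n,
                ((n - k : ℕ) : ℝ) ^ (α - 1) * g ((k : ℝ) * h) j := hswap
          _ ≤ ∑' j, g ((n : ℝ) * h) (j + 1) := hb2
          _ = (∑' j, g ((n : ℝ) * h) j) - g ((n : ℝ) * h) 0 := hb3
      rw [hg0] at hchain
      linarith
  -- conclusion
  intro n hn
  have h1 := main n hn
  have htnn : (0:ℝ) ≤ (n : ℝ) * h := by positivity
  calc y n ≤ ∑' j, g ((n : ℝ) * h) j := h1
    _ = M0 * Real.Gamma α * ((n : ℝ) * h) ^ (α - 1) *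
          mittagLeffler α α (c * ((n : ℝ) * h) ^ α) +
        M2 * mittagLeffler α 1 (c * ((n : ℝ) * h) ^ α) := by
        rw [hgdef]
        rw [Summable.tsum_add ((S1 _ htnn).mul_left _) ((S2 _ htnn).mul_left _),
          tsum_mul_left, tsum_mul_left]
        rfl
end

section
/- Let (y^j)_{j≥0} and (G^j)_{j≥0} be sequences of nonnegative real numbers with y^0 = 0. Let w : ℕ → ℝ satisfy w_0 > 0 and w_j < 0 for all j ≥ 1, and let b : ℕ → ℝ be the convolution-inverse weights, i.e. ∑_{i=0}^{m} w_i b_{m−i} = 1 if m = 0 and ∑_{i=0}^{m} w_i b_{m−i} = 0 for every m ≥ 1. If ∑_{j=0}^{n} w_{n−j} y^j ≤ G^n for every n ≥ 1, then y^n ≤ ∑_{j=1}^{n} b_{n−j} G^j for every n ≥ 1. -/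
/-- An inequality for the discrete Caputo derivative can be "integrated": if the CQ weights
`w` satisfy `w_0 > 0`, `w_j < 0` for `j ≥ 1`, `b` is their convolution inverse, and the
nonnegative sequences `y`, `G` with `y^0 = 0` satisfy `∑_{j=0}^{n} w_{n−j} y^j ≤ G^n` for all
`n ≥ 1`, then `y^n ≤ ∑_{j=1}^{n} b_{n−j} G^j` for all `n ≥ 1`. -/
theorem cq_caputo_integrated (y G : ℕ → ℝ)
    (hy : ∀ j : ℕ, 0 ≤ y j) (hG : ∀ j : ℕ, 0 ≤ G j) (hy0 : y 0 = 0)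
    (w b : ℕ → ℝ) (hw0 : 0 < w 0) (hwneg : ∀ j : ℕ, 1 ≤ j → w j < 0)
    (hb0 : w 0 * b 0 = 1)
    (hbm : ∀ m : ℕ, 1 ≤ m → ∑ i ∈ Finset.range (m + 1), w i * b (m - i) = 0)
    (hineq : ∀ n : ℕ, 1 ≤ n → ∑ j ∈ Finset.range (n + 1), w (n - j) * y j ≤ G n) :
    ∀ n : ℕ, 1 ≤ n → y n ≤ ∑ j ∈ Finset.Icc 1 n, b (n - j) * G j := by
  classical
  -- G' vanishes at 0 and equals G elsewhere
  set G' : ℕ → ℝ := fun k => if k = 0 then 0 else G k with hG'def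
  set S : ℕ → ℝ := fun j => ∑ k ∈ Finset.range (j + 1), b (j - k) * G' k with hSdef
  -- power series
  set W : PowerSeries ℝ := PowerSeries.mk w with hW
  set B : PowerSeries ℝ := PowerSeries.mk b with hB
  set Gs : PowerSeries ℝ := PowerSeries.mk G' with hGs
  have hWB : W * B = 1 := by
    ext m
    rw [PowerSeries.coeff_mul, Finset.Nat.sum_antidiagonal_eq_sum_range_succ_mk]
    simp only [hW, hB, PowerSeries.coeff_mk, PowerSeries.coeff_one]
    rcases Nat.eq_zero_or_pos m with h | h
    · subst h; simpa using hb0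
    · rw [hbm m h, if_neg (by omega)]
  have hScoeff : ∀ j : ℕ, S j = PowerSeries.coeff j (Gs * B) := by
    intro j
    rw [PowerSeries.coeff_mul, Finset.Nat.sum_antidiagonal_eq_sum_range_succ_mk]
    simp only [hSdef, hGs, hB, PowerSeries.coeff_mk]
    exact Finset.sum_congr rfl fun k _ => mul_comm _ _
  have key : ∀ n : ℕ, ∑ j ∈ Finset.range (n + 1), w (n - j) * S j = G' n := by
    intro n
    have h2 : (Gs * B) * W = Gs := by
      rw [mul_assoc, mul_comm B W, hWB, mul_one]
    have h1 : PowerSeries.coeff n ((Gs * B) * W)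
        = ∑ j ∈ Finset.range (n + 1), w (n - j) * S j := by
      rw [PowerSeries.coeff_mul, Finset.Nat.sum_antidiagonal_eq_sum_range_succ_mk]
      refine Finset.sum_congr rfl fun k _ => ?_
      rw [hScoeff k, hW, PowerSeries.coeff_mk, mul_comm]
    rw [← h1, h2, hGs, PowerSeries.coeff_mk]
  -- main induction: y n ≤ S n for all n
  have hS0 : S 0 = 0 := by simp [hSdef, hG'def]
  have main : ∀ n : ℕ, y n ≤ S n := by
    intro n
    induction n using Nat.strong_induction_on with
    | _ n ih =>
      rcases Nat.eq_zero_or_pos n with h | h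
      · rw [h, hy0, hS0]
      · have h1 := hineq n h
        have h2 : G n = G' n := by simp only [hG'def]; rw [if_neg (by omega)]
        have hk := key n
        rw [Finset.sum_range_succ] at h1 hk
        simp only [Nat.sub_self] at h1 hk
        have hsum : ∑ j ∈ Finset.range n, w (n - j) * S j
            ≤ ∑ j ∈ Finset.range n, w (n - j) * y j := by
          apply Finset.sum_le_sum
          intro j hj
          have hjn : j < n := Finset.mem_range.mp hj
          have hw : w (n - j) < 0 := hwneg _ (by omega)
          have hyS : y j ≤ S j := ih j hjn
          nlinarith
        have : w 0 * y n ≤ w 0 * S n := by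
          have := h1.trans_eq h2
          nlinarith
        exact le_of_mul_le_mul_left this hw0
  intro n hn
  have hSeq : S n = ∑ j ∈ Finset.Icc 1 n, b (n - j) * G j := by
    have hins : Finset.range (n + 1) = insert 0 (Finset.Icc 1 n) := by
      ext k; simp; omega
    rw [hSdef]
    simp only []
    rw [hins, Finset.sum_insert (by simp)]
    have : G' 0 = 0 := by simp [hG'def]
    rw [this, mul_zero, zero_add]
    refine Finset.sum_congr rfl fun k hk => ?_
    have hk1 : 1 ≤ k := (Finset.mem_Icc.mp hk).1
    simp only [hG'def]; rw [if_neg (by omega)]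
  rw [← hSeq]
  exact main n
end

section
/- Let 0 < α < 1, T > 0, C_b > 0, and let H be a real inner product space. Then there exists C > 0 (depending only on α, T, C_b) such that the following holds for every h ∈ (0,1). Suppose w : ℕ → ℝ satisfies w_0 > 0, w_j < 0 for j ≥ 1 and ∑_{j=0}^{n} w_j ≥ 0 for all n, and b : ℕ → ℝ satisfies ∑_{i=0}^{m} w_i b_{m−i} = 1 if m = 0 and = 0 for m ≥ 1, with |b_0| ≤ C_b h^{α} and |b_j| ≤ C_b h^{α} j^{α−1} for j ≥ 1. Let (U^n)_{n≥0} be a sequence in H with U^0 = 0, and let (g_n)_{n≥1} be nonnegative reals with h^{α} ∑_{j=0}^{n−1} (n−j)^{α−1} g_{j+1} ≤ F for every n ≥ 1 with nh ≤ T, for some F ≥ 0. If ⟨ ∑_{j=0}^{n} w_{n−j} U^j , U^n ⟩ ≤ g_n ‖U^n‖ for every n ≥ 1 with nh ≤ T, then ‖U^n‖ ≤ C F for every n ≥ 1 with nh ≤ T. -/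
open RealInnerProductSpace

lemma cq_rpow_succ_bound {α : ℝ} (hα : 0 < α) (hα1 : α < 1) {x : ℝ} (hx : 1 ≤ x) :
    x ^ (α - 1) ≤ 2 * (x + 1) ^ (α - 1) := by
  have hx0 : 0 < x := lt_of_lt_of_le one_pos hx
  have h1 : (2 * x) ^ (α - 1) ≤ (x + 1) ^ (α - 1) :=
    Real.rpow_le_rpow_of_nonpos (by linarith) (by linarith) (by linarith)
  have h2 : (2 * x) ^ (α - 1) = 2 ^ (α - 1) * x ^ (α - 1) :=
    Real.mul_rpow (by norm_num) hx0.le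
  have h3 : (2:ℝ) ^ (1 - α) * (2:ℝ) ^ (α - 1) = 1 := by
    rw [← Real.rpow_add (by norm_num)]
    norm_num
  have h4 : (2:ℝ) ^ (1 - α) ≤ 2 := by
    calc (2:ℝ) ^ (1 - α) ≤ (2:ℝ) ^ (1:ℝ) :=
          Real.rpow_le_rpow_of_exponent_le one_le_two (by linarith)
      _ = 2 := Real.rpow_one 2
  calc x ^ (α - 1) = 2 ^ (1 - α) * (2 ^ (α - 1) * x ^ (α - 1)) := by
        rw [← mul_assoc, h3, one_mul]
    _ = 2 ^ (1 - α) * (2 * x) ^ (α - 1) := by rw [h2]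
    _ ≤ 2 ^ (1 - α) * (x + 1) ^ (α - 1) :=
        mul_le_mul_of_nonneg_left h1 (Real.rpow_nonneg (by norm_num) _)
    _ ≤ 2 * (x + 1) ^ (α - 1) :=
        mul_le_mul_of_nonneg_right h4 (Real.rpow_nonneg (by linarith) _)

lemma cq_b_nonneg (w b : ℕ → ℝ) (hw0 : 0 < w 0) (hwneg : ∀ j : ℕ, 1 ≤ j → w j < 0)
    (h0 : w 0 * b 0 = 1)
    (h1 : ∀ m : ℕ, 1 ≤ m → ∑ i ∈ Finset.range (m + 1), w i * b (m - i) = 0) :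
    ∀ m : ℕ, 0 ≤ b m := by
  intro m
  induction m using Nat.strong_induction_on with
  | _ m ih =>
    rcases Nat.eq_zero_or_pos m with hm | hm
    · subst hm
      nlinarith [h0, hw0]
    · have h := h1 m hm
      rw [Finset.sum_range_succ'] at h
      simp only [Nat.sub_zero] at h
      have hsum : ∑ i ∈ Finset.range m, w (i + 1) * b (m - (i + 1)) ≤ 0 := by
        apply Finset.sum_nonpos
        intro i hi
        have hi' : i < m := Finset.mem_range.mp hi
        have hb : 0 ≤ b (m - (i + 1)) := ih _ (by omega)
        have hw : w (i + 1) < 0 := hwneg _ (by omega)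
        exact mul_nonpos_of_nonpos_of_nonneg hw.le hb
      have hwm : 0 ≤ w 0 * b m := by linarith
      by_contra hbm
      push_neg at hbm
      nlinarith

lemma cq_conv_id (w b : ℕ → ℝ) (h0 : w 0 * b 0 = 1)
    (h1 : ∀ m : ℕ, 1 ≤ m → ∑ i ∈ Finset.range (m + 1), w i * b (m - i) = 0)
    (a : ℕ → ℝ) (n : ℕ) :
    ∑ m ∈ Finset.range (n + 1), b (n - m) * ∑ j ∈ Finset.range (m + 1), w (m - j) * a j
      = a n := by
  have key : ∀ k : ℕ, ∑ i ∈ Finset.range (k + 1), b (k - i) * w i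
      = if k = 0 then 1 else 0 := by
    intro k
    rcases Nat.eq_zero_or_pos k with hk | hk
    · subst hk; simpa [mul_comm] using h0
    · rw [if_neg (by omega), ← h1 k hk]
      exact Finset.sum_congr rfl fun i _ => mul_comm _ _
  have step1 : ∑ m ∈ Finset.range (n + 1), b (n - m) * ∑ j ∈ Finset.range (m + 1), w (m - j) * a j
      = ∑ m ∈ Finset.range (n + 1), ∑ j ∈ Finset.range (m + 1), b (n - m) * (w (m - j) * a j) := by
    simp [Finset.mul_sum]
  rw [step1]
  have hcomm : ∀ (m j : ℕ), m ∈ Finset.range (n + 1) ∧ j ∈ Finset.range (m + 1)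
      ↔ m ∈ Finset.Ico j (n + 1) ∧ j ∈ Finset.range (n + 1) := by
    intro m j
    simp only [Finset.mem_range, Finset.mem_Ico]
    omega
  rw [Finset.sum_comm' hcomm]
  have hinner : ∀ j ∈ Finset.range (n + 1),
      ∑ m ∈ Finset.Ico j (n + 1), b (n - m) * (w (m - j) * a j)
        = (if n - j = 0 then 1 else 0) * a j := by
    intro j hj
    have hj' : j ≤ n := Nat.lt_succ_iff.mp (Finset.mem_range.mp hj)
    rw [Finset.sum_Ico_eq_sum_range]
    have hrw : n + 1 - j = (n - j) + 1 := by omega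
    rw [hrw, ← key (n - j), Finset.sum_mul]
    apply Finset.sum_congr rfl
    intro i hi
    have e1 : n - (j + i) = n - j - i := by omega
    have e2 : j + i - j = i := by omega
    rw [e1, e2]; ring
  rw [Finset.sum_congr rfl hinner]
  rw [Finset.sum_eq_single n]
  · simp
  · intro j hj hne
    have hj' : j ≤ n := Nat.lt_succ_iff.mp (Finset.mem_range.mp hj)
    have : n - j ≠ 0 := by omega
    simp [this]
  · intro hn'; exact absurd (Finset.self_mem_range_succ n) hn'

/-- Unconditional stability of the CQ scheme via the energy method. For `0 < α < 1`, `T > 0`,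
`C_b > 0` there is `C > 0` (depending only on `α, T, C_b`) such that for every real inner
product space `H`, every `h ∈ (0,1)`, admissible CQ weights `w` (with nonnegative partial
sums) whose convolution inverse `b` satisfies `|b_0| ≤ C_b h^α`, `|b_j| ≤ C_b h^α j^{α−1}`,
every sequence `U` in `H` with `U^0 = 0` and nonnegative reals `g_n` with
`h^α ∑_{j=0}^{n−1}(n−j)^{α−1} g_{j+1} ≤ F` for `nh ≤ T`: if
`⟨∑_{j=0}^{n} w_{n−j} U^j, U^n⟩ ≤ g_n ‖U^n‖` for every `n ≥ 1` with `nh ≤ T`, then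
`‖U^n‖ ≤ C F` for every such `n`. -/
theorem cq_stability (α T Cb : ℝ) (hα : 0 < α) (hα1 : α < 1) (hT : 0 < T) (hCb : 0 < Cb) :
    ∃ C : ℝ, 0 < C ∧
      ∀ (H : Type) [NormedAddCommGroup H] [InnerProductSpace ℝ H],
      ∀ h : ℝ, h ∈ Set.Ioo (0 : ℝ) 1 →
      ∀ w b : ℕ → ℝ, 0 < w 0 → (∀ j : ℕ, 1 ≤ j → w j < 0) →
      (∀ n : ℕ, 0 ≤ ∑ j ∈ Finset.range (n + 1), w j) →
      w 0 * b 0 = 1 →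
      (∀ m : ℕ, 1 ≤ m → ∑ i ∈ Finset.range (m + 1), w i * b (m - i) = 0) →
      |b 0| ≤ Cb * h ^ α → (∀ j : ℕ, 1 ≤ j → |b j| ≤ Cb * h ^ α * (j : ℝ) ^ (α - 1)) →
      ∀ U : ℕ → H, U 0 = 0 →
      ∀ g : ℕ → ℝ, (∀ n : ℕ, 1 ≤ n → 0 ≤ g n) →
      ∀ F : ℝ, 0 ≤ F →
      (∀ n : ℕ, 1 ≤ n → (n : ℝ) * h ≤ T →
        h ^ α * ∑ j ∈ Finset.range n, ((n - j : ℕ) : ℝ) ^ (α - 1) * g (j + 1) ≤ F) →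
      (∀ n : ℕ, 1 ≤ n → (n : ℝ) * h ≤ T →
        ⟪∑ j ∈ Finset.range (n + 1), w (n - j) • U j, U n⟫ ≤ g n * ‖U n‖) →
      ∀ n : ℕ, 1 ≤ n → (n : ℝ) * h ≤ T → ‖U n‖ ≤ C * F := by
  refine ⟨2 * Cb, by linarith, ?_⟩
  intro H _ _ h hh w b hw0 hwneg hwsum hwb0 hwb1 hb0 hbj U hU0 g hg F hF hgF hineq n hn hnT
  obtain ⟨hh0, hh1⟩ := hh
  set a : ℕ → ℝ := fun m => ‖U m‖ with ha
  have ha0 : a 0 = 0 := by simp [ha, hU0]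
  have hanonneg : ∀ m, 0 ≤ a m := fun m => norm_nonneg _
  -- Step A: the energy estimate ∑ w_{m-j} a_j ≤ g m
  have hE : ∀ m : ℕ, 1 ≤ m → (m : ℝ) * h ≤ T →
      ∑ j ∈ Finset.range (m + 1), w (m - j) * a j ≤ g m := by
    intro m hm hmT
    have hlow : (∑ j ∈ Finset.range (m + 1), w (m - j) * a j) * a m
        ≤ ⟪∑ j ∈ Finset.range (m + 1), w (m - j) • U j, U m⟫ := by
      rw [sum_inner, Finset.sum_mul]
      apply Finset.sum_le_sum
      intro j hj
      rw [real_inner_smul_left]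
      rcases eq_or_ne j m with rfl | hne
      · rw [real_inner_self_eq_norm_mul_norm]
        apply le_of_eq; ring
      · have hjm : j < m := lt_of_le_of_ne (Nat.lt_succ_iff.mp (Finset.mem_range.mp hj)) hne
        have hw : w (m - j) < 0 := hwneg _ (by omega)
        calc w (m - j) * a j * a m = w (m - j) * (a j * a m) := by ring
          _ ≤ w (m - j) * ⟪U j, U m⟫ :=
              mul_le_mul_of_nonpos_left (real_inner_le_norm _ _) hw.le
    have hcomb : (∑ j ∈ Finset.range (m + 1), w (m - j) * a j) * a m ≤ g m * a m :=
      le_trans hlow (hineq m hm hmT)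
    rcases (norm_nonneg (U m)).eq_or_lt with h0 | hpos
    · have ham : a m = 0 := h0.symm
      rw [Finset.sum_range_succ]
      have hnp : ∑ j ∈ Finset.range m, w (m - j) * a j ≤ 0 := by
        apply Finset.sum_nonpos
        intro j hj
        have hjm : j < m := Finset.mem_range.mp hj
        exact mul_nonpos_of_nonpos_of_nonneg (hwneg _ (by omega)).le (hanonneg j)
      have : w (m - m) * a m = 0 := by rw [ham]; ring
      rw [this]
      have := hg m hm
      linarith
    · exact le_of_mul_le_mul_right hcomb hpos
  -- Step B: b is nonnegative
  have hbnn : ∀ m, 0 ≤ b m := cq_b_nonneg w b hw0 hwneg hwb0 hwb1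
  -- Step C: convolution identity
  have hid := cq_conv_id w b hwb0 hwb1 a n
  rw [Finset.sum_range_succ'] at hid
  have he0 : ∑ j ∈ Finset.range (0 + 1), w (0 - j) * a j = 0 := by
    simp [ha0]
  rw [he0, mul_zero, add_zero] at hid
  -- Step D: bound each term
  have hterm : ∀ m ∈ Finset.range n,
      b (n - (m + 1)) * ∑ j ∈ Finset.range (m + 1 + 1), w (m + 1 - j) * a j
        ≤ 2 * Cb * (h ^ α * (((n - m : ℕ) : ℝ) ^ (α - 1) * g (m + 1))) := by
    intro m hm
    have hmn : m < n := Finset.mem_range.mp hm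
    have hhα : 0 < h ^ α := Real.rpow_pos_of_pos hh0 α
    -- b (n - (m+1)) ≤ 2 Cb h^α (n-m)^{α-1}
    have hbbound : b (n - (m + 1)) ≤ 2 * Cb * h ^ α * ((n - m : ℕ) : ℝ) ^ (α - 1) := by
      rcases Nat.eq_zero_or_pos (n - (m + 1)) with hk | hk
      · have hnm : n - m = 1 := by omega
        rw [hk, hnm]
        have : b 0 ≤ Cb * h ^ α := le_trans (le_abs_self _) hb0
        simp only [Nat.cast_one, Real.one_rpow, mul_one]
        nlinarith
      · set k := n - (m + 1) with hkdef
        have hnm : n - m = k + 1 := by omega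
        have h1 : b k ≤ Cb * h ^ α * (k : ℝ) ^ (α - 1) :=
          le_trans (le_abs_self _) (hbj k hk)
        have h2 : (k : ℝ) ^ (α - 1) ≤ 2 * ((k : ℝ) + 1) ^ (α - 1) :=
          cq_rpow_succ_bound hα hα1 (by exact_mod_cast hk)
        have h3 : ((n - m : ℕ) : ℝ) = (k : ℝ) + 1 := by rw [hnm]; push_cast; ring
        rw [h3]
        calc b k ≤ Cb * h ^ α * (k : ℝ) ^ (α - 1) := h1
          _ ≤ Cb * h ^ α * (2 * ((k : ℝ) + 1) ^ (α - 1)) := by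
              apply mul_le_mul_of_nonneg_left h2 (by positivity)
          _ = 2 * Cb * h ^ α * ((k : ℝ) + 1) ^ (α - 1) := by ring
    have hgm : 0 ≤ g (m + 1) := hg _ (by omega)
    have hEm : ∑ j ∈ Finset.range (m + 1 + 1), w (m + 1 - j) * a j ≤ g (m + 1) := by
      apply hE (m + 1) (by omega)
      calc ((m + 1 : ℕ) : ℝ) * h ≤ (n : ℝ) * h := by
            apply mul_le_mul_of_nonneg_right _ hh0.le
            exact_mod_cast Nat.succ_le_of_lt hmn
        _ ≤ T := hnT
    have hrnn : (0:ℝ) ≤ ((n - m : ℕ) : ℝ) ^ (α - 1) := Real.rpow_nonneg (Nat.cast_nonneg _) _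
    calc b (n - (m + 1)) * ∑ j ∈ Finset.range (m + 1 + 1), w (m + 1 - j) * a j
        ≤ b (n - (m + 1)) * g (m + 1) :=
          mul_le_mul_of_nonneg_left hEm (hbnn _)
      _ ≤ (2 * Cb * h ^ α * ((n - m : ℕ) : ℝ) ^ (α - 1)) * g (m + 1) :=
          mul_le_mul_of_nonneg_right hbbound hgm
      _ = 2 * Cb * (h ^ α * (((n - m : ℕ) : ℝ) ^ (α - 1) * g (m + 1))) := by ring
  -- conclude
  have hsum : a n ≤ ∑ m ∈ Finset.range n,
      2 * Cb * (h ^ α * (((n - m : ℕ) : ℝ) ^ (α - 1) * g (m + 1))) := by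
    rw [← hid]
    exact Finset.sum_le_sum hterm
  have heq : ∑ m ∈ Finset.range n,
      2 * Cb * (h ^ α * (((n - m : ℕ) : ℝ) ^ (α - 1) * g (m + 1)))
      = 2 * Cb * (h ^ α * ∑ j ∈ Finset.range n, ((n - j : ℕ) : ℝ) ^ (α - 1) * g (j + 1)) := by
    rw [Finset.mul_sum, Finset.mul_sum]
  rw [heq] at hsum
  calc ‖U n‖ = a n := rfl
    _ ≤ 2 * Cb * (h ^ α * ∑ j ∈ Finset.range n, ((n - j : ℕ) : ℝ) ^ (α - 1) * g (j + 1)) := hsum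
    _ ≤ 2 * Cb * F := by
        apply mul_le_mul_of_nonneg_left (hgF n hn hnT) (by linarith)
end

section
/- Let 0 < α < 1. There exists a constant C > 0 depending only on α such that for every integer n ≥ 2: ∑_{j=0}^{n−1} (n−j)^{α−1} (j+1)^{−1} ≤ C n^{α−1} log n. -/
open Finset

lemma sum_rpow_le (α : ℝ) (hα : 0 < α) (hα1 : α < 1) (n : ℕ) (hn : 1 ≤ n) :
    ∑ k ∈ Finset.range n, ((k : ℝ) + 1) ^ (α - 1) ≤ (1 + 1 / α) * (n : ℝ) ^ α := by
  have hn' : (1:ℝ) ≤ n := by exact_mod_cast hn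
  have hone : (1:ℝ) ≤ (n:ℝ) ^ α := Real.one_le_rpow hn' hα.le
  obtain ⟨m, rfl⟩ := Nat.exists_eq_add_of_le hn
  have hant : AntitoneOn (fun x : ℝ => x ^ (α - 1)) (Set.Icc 1 (1 + (m:ℝ))) := by
    intro x hx y hy hxy
    exact Real.rpow_le_rpow_of_nonpos (lt_of_lt_of_le one_pos hx.1) hxy (by linarith)
  have hint := hant.sum_le_integral
  have hintval : (∫ x in (1:ℝ)..(1 + (m:ℝ)), x ^ (α - 1)) =
      ((1 + (m:ℝ)) ^ (α - 1 + 1) - 1 ^ (α - 1 + 1)) / (α - 1 + 1) := by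
    rw [integral_rpow (Or.inl (by linarith))]
  have hineq : ∑ i ∈ Finset.range m, ((1:ℝ) + ((i+1:ℕ):ℝ)) ^ (α - 1) ≤
      ((1 + (m:ℝ)) ^ α - 1) / α := by
    rw [hintval] at hint
    simpa using hint
  rw [add_comm 1 m, Finset.sum_range_succ']
  have hterm : ∀ i, (((i+1:ℕ):ℝ) + 1) ^ (α - 1) = ((1:ℝ) + ((i+1:ℕ):ℝ)) ^ (α - 1) := by
    intro i; rw [add_comm]
  calc ∑ i ∈ Finset.range m, (((i+1:ℕ):ℝ) + 1) ^ (α - 1) + (((0:ℕ):ℝ) + 1) ^ (α - 1)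
      ≤ ((1 + (m:ℝ)) ^ α - 1) / α + 1 := by
        have hsum : ∑ i ∈ Finset.range m, (((i+1:ℕ):ℝ) + 1) ^ (α - 1)
            = ∑ i ∈ Finset.range m, ((1:ℝ) + ((i+1:ℕ):ℝ)) ^ (α - 1) :=
          Finset.sum_congr rfl (fun i _ => hterm i)
        have h0 : (((0:ℕ):ℝ) + 1) ^ (α - 1) = 1 := by norm_num
        rw [hsum, h0]
        linarith [hineq]
    _ ≤ (1 + 1 / α) * ((m+1:ℕ):ℝ) ^ α := by
        push_cast
        have h1 : ((1:ℝ) + m) ^ α = ((m:ℝ) + 1) ^ α := by rw [add_comm]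
        rw [h1]
        have hone' : (1:ℝ) ≤ ((m:ℝ) + 1) ^ α := by push_cast at hone; linarith [hone]
        set X := ((m:ℝ) + 1) ^ α with hX
        have e : (1 + 1/α) * X = X + X/α := by field_simp
        rw [e]
        have h3 : (X - 1)/α ≤ X/α := by gcongr <;> linarith
        linarith

/-- Discrete fractional integral bound for the BDF1-CQ truncation error: for `0 < α < 1`
there is `C > 0` (depending only on `α`) such that
`∑_{j=0}^{n−1} (n−j)^{α−1} (j+1)^{−1} ≤ C n^{α−1} log n` for all `n ≥ 2`. -/
theorem discrete_frac_integral_bdf1 (α : ℝ) (hα : 0 < α) (hα1 : α < 1) :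
    ∃ C : ℝ, 0 < C ∧ ∀ n : ℕ, 2 ≤ n →
      ∑ j ∈ Finset.range n, ((n - j : ℕ) : ℝ) ^ (α - 1) * ((j : ℝ) + 1)⁻¹ ≤
        C * (n : ℝ) ^ (α - 1) * Real.log n := by
  have hl2 : 0 < Real.log 2 := Real.log_pos one_lt_two
  have hc : (0:ℝ) < 4 + 2 / α := by positivity
  refine ⟨2 + (4 + 2 / α) / Real.log 2, by positivity, ?_⟩
  intro n hn
  set m := n / 2 with hm
  have hmn : m + 1 ≤ n := by omega
  have hn0 : (0:ℝ) < n := by exact_mod_cast (by omega : 0 < n)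
  have hn2 : (2:ℝ) ≤ n := by exact_mod_cast hn
  have hlogn : Real.log 2 ≤ Real.log n := Real.log_le_log (by norm_num) hn2
  have hP : (0:ℝ) ≤ (n:ℝ) ^ (α - 1) := Real.rpow_nonneg hn0.le _
  -- split the sum
  rw [Finset.range_eq_Ico, ← Finset.sum_Ico_consecutive _ (Nat.zero_le (m+1)) hmn]
  have part1 : ∑ j ∈ Finset.Ico 0 (m+1), ((n - j : ℕ) : ℝ) ^ (α - 1) * ((j : ℝ) + 1)⁻¹
      ≤ 2 * (n:ℝ) ^ (α - 1) * (1 + Real.log n) := by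
    have step : ∀ j ∈ Finset.Ico 0 (m+1),
        ((n - j : ℕ) : ℝ) ^ (α - 1) * ((j : ℝ) + 1)⁻¹
          ≤ (2 * (n:ℝ) ^ (α - 1)) * ((j : ℝ) + 1)⁻¹ := by
      intro j hj
      rw [Finset.mem_Ico] at hj
      have hjm : j ≤ m := by omega
      have hjn : j < n := by omega
      have hcast : ((n - j : ℕ) : ℝ) = (n:ℝ) - j := by
        rw [Nat.cast_sub hjn.le]
      have hmle : ((m:ℕ):ℝ) ≤ (n:ℝ)/2 := by
        rw [hm]; exact_mod_cast Nat.cast_div_le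
      have hjle : (j:ℝ) ≤ (n:ℝ)/2 := le_trans (by exact_mod_cast hjm) hmle
      have hge : (n:ℝ)/2 ≤ (n:ℝ) - j := by linarith
      have h1 : ((n - j : ℕ) : ℝ) ^ (α - 1) ≤ ((n:ℝ)/2) ^ (α - 1) := by
        rw [hcast]
        exact Real.rpow_le_rpow_of_nonpos (by positivity) hge (by linarith)
      have h2 : ((n:ℝ)/2) ^ (α - 1) = (n:ℝ) ^ (α - 1) * (2:ℝ) ^ (1 - α) := by
        rw [Real.div_rpow hn0.le (by norm_num), div_eq_mul_inv, ← Real.rpow_neg (by norm_num)]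
        ring_nf
      have h3 : (2:ℝ) ^ (1 - α) ≤ 2 := by
        calc (2:ℝ) ^ (1 - α) ≤ (2:ℝ) ^ (1:ℝ) :=
              Real.rpow_le_rpow_of_exponent_le one_le_two (by linarith)
          _ = 2 := Real.rpow_one 2
      have h4 : ((n - j : ℕ) : ℝ) ^ (α - 1) ≤ 2 * (n:ℝ) ^ (α - 1) := by
        rw [h2] at h1
        nlinarith [hP]
      have hjpos : (0:ℝ) < (j:ℝ) + 1 := by positivity
      exact mul_le_mul_of_nonneg_right h4 (by positivity)
    calc ∑ j ∈ Finset.Ico 0 (m+1), ((n - j : ℕ) : ℝ) ^ (α - 1) * ((j : ℝ) + 1)⁻¹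
        ≤ ∑ j ∈ Finset.Ico 0 (m+1), (2 * (n:ℝ) ^ (α - 1)) * ((j : ℝ) + 1)⁻¹ :=
          Finset.sum_le_sum step
      _ = 2 * (n:ℝ) ^ (α - 1) * ∑ j ∈ Finset.Ico 0 (m+1), ((j : ℝ) + 1)⁻¹ := by
          rw [← Finset.mul_sum]
      _ ≤ 2 * (n:ℝ) ^ (α - 1) * (1 + Real.log n) := by
          have hharm : ∑ j ∈ Finset.Ico 0 (m+1), ((j : ℝ) + 1)⁻¹ = ((harmonic (m+1) : ℚ) : ℝ) := by
            rw [Nat.Ico_zero_eq_range, harmonic]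
            push_cast
            rfl
          rw [hharm]
          have hb := harmonic_le_one_add_log (m+1)
          have hlmn : Real.log (m+1) ≤ Real.log n := by
            apply Real.log_le_log (by positivity)
            exact_mod_cast hmn
          have : ((harmonic (m+1) : ℚ) : ℝ) ≤ 1 + Real.log n := by
            calc ((harmonic (m+1) : ℚ) : ℝ) ≤ 1 + Real.log ((m+1 : ℕ) : ℝ) := hb
              _ ≤ 1 + Real.log n := by push_cast; push_cast at hlmn; linarith
          nlinarith [hP, this]
  have part2 : ∑ j ∈ Finset.Ico (m+1) n, ((n - j : ℕ) : ℝ) ^ (α - 1) * ((j : ℝ) + 1)⁻¹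
      ≤ (2 * (1 + 1/α)) * (n:ℝ) ^ (α - 1) := by
    have step : ∀ j ∈ Finset.Ico (m+1) n,
        ((n - j : ℕ) : ℝ) ^ (α - 1) * ((j : ℝ) + 1)⁻¹
          ≤ ((n - j : ℕ) : ℝ) ^ (α - 1) * (2/(n:ℝ)) := by
      intro j hj
      rw [Finset.mem_Ico] at hj
      have hj2 : n ≤ 2 * (j + 1) := by omega
      have hinv : ((j : ℝ) + 1)⁻¹ ≤ 2/(n:ℝ) := by
        rw [inv_le_iff_one_le_mul₀ (by positivity)]
        rw [div_mul_eq_mul_div, le_div_iff₀ hn0]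
        have : (n:ℝ) ≤ 2 * ((j:ℝ) + 1) := by exact_mod_cast hj2
        linarith
      exact mul_le_mul_of_nonneg_left hinv (Real.rpow_nonneg (Nat.cast_nonneg _) _)
    calc ∑ j ∈ Finset.Ico (m+1) n, ((n - j : ℕ) : ℝ) ^ (α - 1) * ((j : ℝ) + 1)⁻¹
        ≤ ∑ j ∈ Finset.Ico (m+1) n, ((n - j : ℕ) : ℝ) ^ (α - 1) * (2/(n:ℝ)) :=
          Finset.sum_le_sum step
      _ ≤ ∑ j ∈ Finset.range n, ((n - j : ℕ) : ℝ) ^ (α - 1) * (2/(n:ℝ)) := by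
          apply Finset.sum_le_sum_of_subset_of_nonneg
          · rw [Finset.range_eq_Ico]
            exact Finset.Ico_subset_Ico (Nat.zero_le _) le_rfl
          · intro i _ _
            positivity
      _ = (∑ j ∈ Finset.range n, ((n - j : ℕ) : ℝ) ^ (α - 1)) * (2/(n:ℝ)) := by
          rw [Finset.sum_mul]
      _ ≤ ((1 + 1/α) * (n:ℝ) ^ α) * (2/(n:ℝ)) := by
          have hrelf0 := Finset.sum_range_reflect (fun k => (((k+1 : ℕ)) : ℝ) ^ (α - 1)) n
          have hrefl : ∑ j ∈ Finset.range n, ((n - j : ℕ) : ℝ) ^ (α - 1)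
              = ∑ k ∈ Finset.range n, ((k : ℝ) + 1) ^ (α - 1) := by
            calc ∑ j ∈ Finset.range n, ((n - j : ℕ) : ℝ) ^ (α - 1)
                = ∑ j ∈ Finset.range n, ((n - 1 - j + 1 : ℕ) : ℝ) ^ (α - 1) := by
                  apply Finset.sum_congr rfl
                  intro j hj
                  rw [Finset.mem_range] at hj
                  congr 2
                  omega
              _ = ∑ j ∈ Finset.range n, ((j + 1 : ℕ) : ℝ) ^ (α - 1) := hrelf0
              _ = ∑ k ∈ Finset.range n, ((k : ℝ) + 1) ^ (α - 1) := by push_cast; rfl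
          rw [hrefl]
          exact mul_le_mul_of_nonneg_right (sum_rpow_le α hα hα1 n (by omega)) (by positivity)
      _ = (2 * (1 + 1/α)) * (n:ℝ) ^ (α - 1) := by
          have : (n:ℝ) ^ (α - 1) = (n:ℝ) ^ α / (n:ℝ) := by
            rw [Real.rpow_sub hn0, Real.rpow_one]
          rw [this]
          field_simp
  have hfinal : 2 * (n:ℝ) ^ (α - 1) * (1 + Real.log n) + (2 * (1 + 1/α)) * (n:ℝ) ^ (α - 1)
      ≤ (2 + (4 + 2 / α) / Real.log 2) * (n:ℝ) ^ (α - 1) * Real.log n := by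
    set P := (n:ℝ) ^ (α - 1)
    set L := Real.log n
    set d := (4 + 2/α) / Real.log 2 with hd
    have hcd : (4 + 2/α) = d * Real.log 2 := (div_mul_cancel₀ _ hl2.ne').symm
    have hdpos : 0 < d := by positivity
    have hcdP : (4 + 2/α) * P = d * Real.log 2 * P := by rw [hcd]
    have key : d * Real.log 2 * P ≤ d * L * P :=
      mul_le_mul_of_nonneg_right (mul_le_mul_of_nonneg_left hlogn hdpos.le) hP
    have expand : 2*P*(1+L) + 2 * (1 + 1/α) * P = 2*P*L + (4 + 2/α)*P := by ring
    have expand2 : (2+d)*P*L = 2*P*L + d*L*P := by ring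
    rw [expand, hcdP, expand2]
    linarith [key]
  linarith [part1, part2]
end

section
/- Let α = 1/2. There exists a constant C > 0 such that for every integer n ≥ 2: ∑_{j=0}^{n−1} (n−j)^{−1/2} (j+1)^{−1} ≤ C n^{−1/2} log n. -/
open Finset Real

private lemma sqrt_inv_sum (n : ℕ) :
    ∑ k ∈ Finset.range n, (Real.sqrt (k + 1))⁻¹ ≤ 2 * Real.sqrt n := by
  induction n with
  | zero => simp
  | succ n ih =>
    rw [Finset.sum_range_succ]
    have hb : (0:ℝ) ≤ (n:ℝ) + 1 := by positivity
    have ha2 : Real.sqrt n ^ 2 = n := Real.sq_sqrt (by positivity)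
    have hb2 : Real.sqrt ((n:ℝ) + 1) ^ 2 = (n:ℝ) + 1 := Real.sq_sqrt hb
    have hbpos : 0 < Real.sqrt ((n:ℝ) + 1) := Real.sqrt_pos.mpr (by positivity)
    have key : (Real.sqrt ((n:ℝ) + 1))⁻¹ ≤ 2 * Real.sqrt ((n:ℝ)+1) - 2 * Real.sqrt n := by
      rw [inv_le_iff_one_le_mul₀ hbpos]
      nlinarith [sq_nonneg (Real.sqrt ((n:ℝ)+1) - Real.sqrt n), Real.sqrt_nonneg (n:ℝ)]
    push_cast
    calc (∑ k ∈ Finset.range n, (Real.sqrt (↑k + 1))⁻¹) + (Real.sqrt (↑n + 1))⁻¹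
        ≤ 2 * Real.sqrt n + (2 * Real.sqrt ((n:ℝ)+1) - 2 * Real.sqrt n) := by
          exact add_le_add ih key
      _ = 2 * Real.sqrt ((n:ℝ)+1) := by ring

private lemma harmonic_sum_le (n : ℕ) :
    ∑ j ∈ Finset.range n, ((j : ℝ) + 1)⁻¹ ≤ 1 + Real.log n := by
  have := harmonic_le_one_add_log n
  have h : ((harmonic n : ℚ) : ℝ) = ∑ j ∈ Finset.range n, ((j : ℝ) + 1)⁻¹ := by
    rw [harmonic]
    push_cast
    rfl
  linarith [h ▸ this]

/-- Borderline case `α = 1/2`: there is `C > 0` such that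
`∑_{j=0}^{n−1} (n−j)^{−1/2} (j+1)^{−1} ≤ C n^{−1/2} log n` for every `n ≥ 2`. -/
theorem discrete_frac_integral_sq_half (α : ℝ) (hα : α = 1 / 2) :
    ∃ C : ℝ, 0 < C ∧ ∀ n : ℕ, 2 ≤ n →
      ∑ j ∈ Finset.range n, ((n - j : ℕ) : ℝ) ^ (α - 1) * ((j : ℝ) + 1)⁻¹ ≤
        C * (n : ℝ) ^ (α - 1) * Real.log n := by
  subst hα
  refine ⟨20, by norm_num, fun n hn => ?_⟩
  have hnpos : (0:ℝ) < n := by positivity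
  have hsn : 0 < Real.sqrt n := Real.sqrt_pos.mpr hnpos
  have hrpow : ∀ x : ℝ, 0 ≤ x → x ^ ((1:ℝ)/2 - 1) = (Real.sqrt x)⁻¹ := by
    intro x hx
    rw [show (1:ℝ)/2 - 1 = -(1/2) by norm_num, Real.rpow_neg hx, Real.sqrt_eq_rpow]
  -- pointwise bound
  have hterm : ∀ j ∈ Finset.range n,
      ((n - j : ℕ) : ℝ) ^ ((1:ℝ)/2 - 1) * ((j : ℝ) + 1)⁻¹ ≤
      Real.sqrt 2 * (Real.sqrt n)⁻¹ * ((j : ℝ) + 1)⁻¹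
        + (2 / n) * (Real.sqrt ((n - j : ℕ)))⁻¹ := by
    intro j hj
    rw [Finset.mem_range] at hj
    set a : ℝ := ((n - j : ℕ) : ℝ) with ha
    have ha1 : (1:ℝ) ≤ a := by
      have h1 : 1 ≤ n - j := Nat.le_sub_of_add_le (by omega)
      rw [ha]; exact_mod_cast h1
    have hapos : 0 < a := by linarith
    have hsa : 0 < Real.sqrt a := Real.sqrt_pos.mpr hapos
    rw [hrpow a hapos.le]
    have hjpos : (0:ℝ) < (j:ℝ) + 1 := by positivity
    by_cases hc : (n : ℝ) ≤ 2 * a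
    · -- (√a)⁻¹ ≤ √2 / √n
      have h1 : Real.sqrt n ≤ Real.sqrt 2 * Real.sqrt a := by
        rw [← Real.sqrt_mul (by norm_num)]
        exact Real.sqrt_le_sqrt hc
      have h2 : (Real.sqrt a)⁻¹ ≤ Real.sqrt 2 * (Real.sqrt n)⁻¹ := by
        rw [inv_le_iff_one_le_mul₀ hsa]
        have h2' := mul_le_mul_of_nonneg_right h1 (inv_nonneg.mpr hsn.le)
        rw [mul_inv_cancel₀ hsn.ne'] at h2'
        calc (1:ℝ) ≤ Real.sqrt 2 * Real.sqrt a * (Real.sqrt n)⁻¹ := h2'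
          _ = Real.sqrt 2 * (Real.sqrt n)⁻¹ * Real.sqrt a := by ring
      have : (Real.sqrt a)⁻¹ * ((j:ℝ)+1)⁻¹ ≤ Real.sqrt 2 * (Real.sqrt n)⁻¹ * ((j:ℝ)+1)⁻¹ :=
        mul_le_mul_of_nonneg_right h2 (by positivity)
      have hpos2 : 0 ≤ (2 / (n:ℝ)) * (Real.sqrt a)⁻¹ := by positivity
      linarith
    · -- j+1 > n/2, so (j+1)⁻¹ ≤ 2/n
      push_neg at hc
      have hcast : a = (n:ℝ) - (j:ℝ) := by
        rw [ha]; push_cast [Nat.cast_sub hj.le]; ring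
      have h3 : (n:ℝ) ≤ 2 * ((j:ℝ) + 1) := by
        rw [hcast] at hc; linarith
      have h4 : ((j:ℝ)+1)⁻¹ ≤ 2 / n := by
        rw [inv_le_iff_one_le_mul₀ hjpos, div_mul_eq_mul_div, le_div_iff₀ hnpos]
        linarith
      have : (Real.sqrt a)⁻¹ * ((j:ℝ)+1)⁻¹ ≤ (Real.sqrt a)⁻¹ * (2 / n) :=
        mul_le_mul_of_nonneg_left h4 (by positivity)
      have hpos1 : 0 ≤ Real.sqrt 2 * (Real.sqrt n)⁻¹ * ((j:ℝ)+1)⁻¹ := by positivity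
      linarith [this]
  calc ∑ j ∈ Finset.range n, ((n - j : ℕ) : ℝ) ^ ((1:ℝ)/2 - 1) * ((j : ℝ) + 1)⁻¹
      ≤ ∑ j ∈ Finset.range n, (Real.sqrt 2 * (Real.sqrt n)⁻¹ * ((j : ℝ) + 1)⁻¹
          + (2 / n) * (Real.sqrt ((n - j : ℕ)))⁻¹) := Finset.sum_le_sum hterm
    _ = Real.sqrt 2 * (Real.sqrt n)⁻¹ * ∑ j ∈ Finset.range n, ((j : ℝ) + 1)⁻¹
          + (2 / n) * ∑ j ∈ Finset.range n, (Real.sqrt ((n - j : ℕ)))⁻¹ := by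
        rw [Finset.sum_add_distrib, Finset.mul_sum, Finset.mul_sum]
    _ ≤ Real.sqrt 2 * (Real.sqrt n)⁻¹ * (1 + Real.log n) + (2 / n) * (2 * Real.sqrt n) := by
        have hre : ∑ j ∈ Finset.range n, (Real.sqrt ((n - j : ℕ)))⁻¹
            = ∑ k ∈ Finset.range n, (Real.sqrt (k + 1))⁻¹ := by
          rw [← Finset.sum_range_reflect (fun k => (Real.sqrt ((k:ℝ) + 1))⁻¹) n]
          apply Finset.sum_congr rfl
          intro j hj
          rw [Finset.mem_range] at hj
          have h : n - j = (n - 1 - j) + 1 := by omega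
          rw [h]
          push_cast
          ring_nf
        have hA := mul_le_mul_of_nonneg_left (harmonic_sum_le n)
          (by positivity : (0:ℝ) ≤ Real.sqrt 2 * (Real.sqrt n)⁻¹)
        have hB : (2 / (n:ℝ)) * ∑ j ∈ Finset.range n, (Real.sqrt ((n - j : ℕ)))⁻¹
            ≤ (2 / (n:ℝ)) * (2 * Real.sqrt n) := by
          rw [hre]
          exact mul_le_mul_of_nonneg_left (sqrt_inv_sum n) (by positivity)
        exact add_le_add hA hB
    _ ≤ 20 * (n:ℝ) ^ ((1:ℝ)/2 - 1) * Real.log n := by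
        rw [hrpow n hnpos.le]
        have hlog : (1:ℝ)/2 ≤ Real.log n := by
          calc (1:ℝ)/2 ≤ Real.log 2 := by
                have := Real.log_two_gt_d9; linarith
            _ ≤ Real.log n := Real.log_le_log (by norm_num) (by exact_mod_cast hn)
        have hs2 : Real.sqrt 2 ≤ 2 := by
          nlinarith [Real.sq_sqrt (by norm_num : (0:ℝ) ≤ 2), Real.sqrt_nonneg 2]
        have hsq : Real.sqrt n * Real.sqrt n = n := Real.mul_self_sqrt hnpos.le
        have h5 : (2 / (n:ℝ)) * (2 * Real.sqrt n) = 4 * (Real.sqrt n)⁻¹ := by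
          field_simp
          nlinarith [hsq]
        rw [h5]
        have hinv : 0 < (Real.sqrt n)⁻¹ := by positivity
        have : Real.sqrt 2 * (1 + Real.log n) + 4 ≤ 20 * Real.log n := by
          nlinarith [Real.sqrt_nonneg 2]
        calc Real.sqrt 2 * (Real.sqrt n)⁻¹ * (1 + Real.log n) + 4 * (Real.sqrt n)⁻¹
            = (Real.sqrt 2 * (1 + Real.log n) + 4) * (Real.sqrt n)⁻¹ := by ring
          _ ≤ (20 * Real.log n) * (Real.sqrt n)⁻¹ := by
              exact mul_le_mul_of_nonneg_right this hinv.le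
          _ = 20 * (Real.sqrt n)⁻¹ * Real.log n := by ring
end
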